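/- Let D be a chain of triangles and let D' be a strongly connected butterfly minor of D containing infinitely many teeth of D. Then D' contains two disjoint rays, namely an out-ray and an in-ray that are vertex-disjoint; consequently D' is not shaped by a star, not a dominated directed ray, and not shaped by a comb. -/

import Mathlib

/-!
Common definitions: directed graphs as vertex/edge sets, directed paths and
walks, rays, arborescences, tree-like models and butterfly minors, laced
paths, knit rays, and the shapes (dominated directed rays, stars, combs,
chains of triangles) from the paper.
-/

universe u

/-- A directed graph on an ambient vertex type `V`, given by a set of vertices
and a set of directed edges (ordered pairs of vertices). -/
structure DGraph (V : Type u) where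
  verts : Set V
  edges : Set (V × V)

namespace DGraph

variable {V : Type u}

instance : Union (DGraph V) := ⟨fun G H => ⟨G.verts ∪ H.verts, G.edges ∪ H.edges⟩⟩
instance : Inter (DGraph V) := ⟨fun G H => ⟨G.verts ∩ H.verts, G.edges ∩ H.edges⟩⟩
instance : HasSubset (DGraph V) := ⟨fun H G => H.verts ⊆ G.verts ∧ H.edges ⊆ G.edges⟩
instance : EmptyCollection (DGraph V) := ⟨⟨∅, ∅⟩⟩

/-- The union of a family of directed graphs. -/
def iUnion {ι : Type} (f : ι → DGraph V) : DGraph V :=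
  ⟨⋃ i, (f i).verts, ⋃ i, (f i).edges⟩

/-- The directed graph obtained by reversing the orientation of every edge. -/
def reverse (G : DGraph V) : DGraph V := ⟨G.verts, {e | (e.2, e.1) ∈ G.edges}⟩

/-- The directed graph consisting of a single vertex and no edges. -/
def single (v : V) : DGraph V := ⟨{v}, ∅⟩

/-- Two vertices joined by both directed edges. -/
def linkBoth (a b : V) : DGraph V := ⟨{a, b}, {(a, b), (b, a)}⟩

/-- A directed triangle (directed cycle of length 3) on `a, b, c`. -/
def triangle (a b c : V) : DGraph V := ⟨{a, b, c}, {(a, b), (b, c), (c, a)}⟩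

/-- The directed graph of a list of vertices with its consecutive edges. -/
def ofList (l : List V) : DGraph V := ⟨{v | v ∈ l}, {e | e ∈ l.zip l.tail}⟩

/-- `𝒟(P)` for the (undirected) path `P` given by the list `l`:
the double path on `l`. -/
def doubleOfList (l : List V) : DGraph V := ofList l ∪ (ofList l).reverse

/-- The directed cycle through the vertices of `l` in order. -/
def cycleOfList (l : List V) : DGraph V :=
  ⟨{v | v ∈ l}, {e | e ∈ l.zip (l.tail ++ l.take 1)}⟩

/-- `G` is a directed cycle. -/
def IsDirectedCycle (G : DGraph V) : Prop :=
  ∃ l : List V, l.Nodup ∧ 2 ≤ l.length ∧ G = cycleOfList l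

/-- The out-oriented ray with vertices `f 0, f 1, …`, rooted at `f 0`. -/
def outRay (f : ℕ → V) : DGraph V :=
  ⟨Set.range f, {e | ∃ n, e = (f n, f (n + 1))}⟩

/-- The in-oriented ray with vertices `f 0, f 1, …`, rooted at `f 0`. -/
def inRay (f : ℕ → V) : DGraph V :=
  ⟨Set.range f, {e | ∃ n, e = (f (n + 1), f n)}⟩

/-- `𝒟(R)` for the undirected ray `R` with vertices `f 0, f 1, …`. -/
def doubleRay (f : ℕ → V) : DGraph V := outRay f ∪ inRay f

/-- The dominated directed ray on an out-oriented ray: the out-oriented ray `f`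
rooted at `f 0` together with the edges `(f (n+1), f 0)`. -/
def domOutRay (f : ℕ → V) : DGraph V :=
  ⟨Set.range f, {e | ∃ n, e = (f n, f (n + 1))} ∪ {e | ∃ n, e = (f (n + 1), f 0)}⟩

/-- The dominated directed ray on an in-oriented ray: the in-oriented ray `f`
rooted at `f 0` together with the edges `(f 0, f (n+1))`. -/
def domInRay (f : ℕ → V) : DGraph V :=
  ⟨Set.range f, {e | ∃ n, e = (f (n + 1), f n)} ∪ {e | ∃ n, e = (f 0, f (n + 1))}⟩

/-- `G` is a dominated directed ray. -/
def IsDominatedDirectedRay (G : DGraph V) : Prop :=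
  ∃ f : ℕ → V, Function.Injective f ∧ (G = domOutRay f ∨ G = domInRay f)

/-- The internal vertices of a path or walk given as a list. -/
def internals (l : List V) : List V := l.tail.dropLast

/-- `l` is a directed path in `G`. -/
def IsPath (G : DGraph V) (l : List V) : Prop :=
  l ≠ [] ∧ l.Nodup ∧ (∀ v ∈ l, v ∈ G.verts) ∧ ∀ e ∈ l.zip l.tail, e ∈ G.edges

/-- `l` is a directed path in `G` with startvertex `a` and endvertex `b`. -/
def IsPathFrom (G : DGraph V) (a b : V) (l : List V) : Prop :=
  IsPath G l ∧ l.head? = some a ∧ l.getLast? = some b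

/-- There is a directed `a`–`b` path in `G`. -/
def Reaches (G : DGraph V) (a b : V) : Prop := ∃ l, IsPathFrom G a b l

/-- `G` is strongly connected. -/
def StronglyConnected (G : DGraph V) : Prop :=
  ∀ a ∈ G.verts, ∀ b ∈ G.verts, Reaches G a b

/-- `l` is a directed `X`–`Y` path in `G`: it starts in `X`, ends in `Y` and
has no internal vertex in `X ∪ Y`. -/
def IsXYPath (G : DGraph V) (X Y : Set V) (l : List V) : Prop :=
  IsPath G l ∧ (∃ a ∈ X, l.head? = some a) ∧ (∃ b ∈ Y, l.getLast? = some b) ∧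
    ∀ v ∈ internals l, v ∉ X ∪ Y

/-- `T` is an in-arborescence rooted at `r`: its underlying graph is a tree
and all edges are directed towards the root `r`. -/
def IsInArborescence (T : DGraph V) (r : V) : Prop :=
  r ∈ T.verts ∧ (∀ e ∈ T.edges, e.1 ∈ T.verts ∧ e.2 ∈ T.verts) ∧
  (∀ w, (r, w) ∉ T.edges) ∧ (∀ v ∈ T.verts, v ≠ r → ∃! w, (v, w) ∈ T.edges) ∧
  (∀ v ∈ T.verts, Reaches T v r)

/-- `T` is an out-arborescence rooted at `r`. -/
def IsOutArborescence (T : DGraph V) (r : V) : Prop := IsInArborescence T.reverse r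

/-- `v` is a leaf of the in-arborescence `T` rooted at `r`. -/
def IsLeafOfInArb (T : DGraph V) (r v : V) : Prop :=
  v ∈ T.verts ∧ v ≠ r ∧ ∀ u, (u, v) ∉ T.edges

/-- `v` is a leaf of the out-arborescence `T` rooted at `r`. -/
def IsLeafOfOutArb (T : DGraph V) (r v : V) : Prop := IsLeafOfInArb T.reverse r v

/-- A tree-like model of `H` in `D`; every vertex of `H` is identified with the
common root of the in- and out-arborescence of its branch set. -/
structure TreeLikeModel (D H : DGraph V) where
  bag : V → DGraph V
  tin : V → DGraph V
  tout : V → DGraph V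
  emap : V × V → V × V
  bag_sub : ∀ v ∈ H.verts, bag v ⊆ D
  bag_disjoint : ∀ v ∈ H.verts, ∀ w ∈ H.verts, v ≠ w → (bag v).verts ∩ (bag w).verts = ∅
  bag_eq : ∀ v ∈ H.verts, bag v = tin v ∪ tout v
  tin_arb : ∀ v ∈ H.verts, IsInArborescence (tin v) v
  tout_arb : ∀ v ∈ H.verts, IsOutArborescence (tout v) v
  roots_eq : ∀ v ∈ H.verts, (tin v).verts ∩ (tout v).verts = {v}
  emap_mem : ∀ e ∈ H.edges, emap e ∈ D.edges
  emap_tail : ∀ e ∈ H.edges, (emap e).1 ∈ (tout e.1).verts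
  emap_head : ∀ e ∈ H.edges, (emap e).2 ∈ (tin e.2).verts

/-- `H` is a butterfly minor of `D`. -/
def IsButterflyMinor (D H : DGraph V) : Prop := Nonempty (TreeLikeModel D H)

/-- `G` is a double path (`𝒟(P)` for an undirected path `P`) with endpoints
`a` and `b`. -/
def IsDoublePath (G : DGraph V) (a b : V) : Prop :=
  ∃ l : List V, l.Nodup ∧ l.head? = some a ∧ l.getLast? = some b ∧ G = doubleOfList l

/-- `G = 𝒟(S)` for a subdivided star `S` with infinitely many leaves, with
centre `c` and branches `q n`; `teeth` is the set of leaves of `S`. -/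
def IsDSubdividedStar (G : DGraph V) (teeth : Set V) : Prop :=
  ∃ (c : V) (q : ℕ → List V),
    (∀ n, (q n).Nodup ∧ (q n).head? = some c ∧ 2 ≤ (q n).length) ∧
    (∀ m n, m ≠ n → ∀ v, v ∈ q m → v ∈ q n → v = c) ∧
    G = iUnion (fun n => doubleOfList (q n)) ∧
    teeth = {v | ∃ n, (q n).getLast? = some v}

/-- `G` is obtained from `𝒟(S)` for a subdivided star `S` by replacing the
centre of infinite degree by a dominated directed ray. -/
def IsRayCentreStar (G : DGraph V) (teeth : Set V) : Prop :=
  ∃ (f : ℕ → V) (R : DGraph V) (g : ℕ → V) (q : ℕ → List V),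
    Function.Injective f ∧ (R = domOutRay f ∨ R = domInRay f) ∧
    (∀ n, (q n).Nodup ∧ (q n).head? = some (g n)) ∧
    (∀ n, ∀ v ∈ q n, v ∉ Set.range f) ∧
    (∀ m n, m ≠ n → ∀ v ∈ q m, v ∉ q n) ∧
    G = R ∪ iUnion (fun n => doubleOfList (q n) ∪ linkBoth (f n) (g n)) ∧
    teeth = {v | ∃ n, (q n).getLast? = some v}

/-- `G` is shaped by a star, with set of teeth `teeth`. -/
def IsShapedByStar (G : DGraph V) (teeth : Set V) : Prop :=
  (IsDominatedDirectedRay G ∧ teeth = G.verts) ∨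
  IsDSubdividedStar G teeth ∨ IsRayCentreStar G teeth

/-- `G = 𝒟(C)` for a comb `C` with spine `f`, branches `q n` attached at
`f (α n)`; `teeth` is the set of teeth of `C`. -/
def IsDComb (G : DGraph V) (teeth : Set V) : Prop :=
  ∃ (f : ℕ → V) (α : ℕ → ℕ) (q : ℕ → List V),
    Function.Injective f ∧ Function.Injective α ∧
    (∀ n, (q n).Nodup ∧ (q n).head? = some (f (α n))) ∧
    (∀ n, ∀ v ∈ (q n).tail, v ∉ Set.range f) ∧
    (∀ m n, m ≠ n → ∀ v ∈ q m, v ∉ q n) ∧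
    G = doubleRay f ∪ iUnion (fun n => doubleOfList (q n)) ∧
    teeth = {v | ∃ n, (q n).getLast? = some v}

/-- The double path on `l` together with both edges between `b` and the first
vertex of `l` (empty if `l` is empty). -/
def branchGraph (b : V) (l : List V) : DGraph V :=
  match l with
  | [] => ∅
  | h :: _ => doubleOfList l ∪ linkBoth b h

/-- `G` is obtained from `𝒟(C)` for a comb `C` by replacing each junction of
`C` by a directed cycle of length 3 as described in the paper.  Position `k`
of the spine is replaced by the piece `S k` (a single vertex, or a directed
triangle at junctions), with `L k`, `R k`, `B k` the vertices of `S k` to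
which the left spine part, the right spine part and the branch attach, and
`t n` the tooth of branch `n`. -/
def IsTriangleComb (G : DGraph V) (teeth : Set V) : Prop :=
  ∃ (α : ℕ → ℕ) (q : ℕ → List V) (S : ℕ → DGraph V) (L R B : ℕ → V) (t : ℕ → V),
    Function.Injective α ∧
    (∀ j k, j ≠ k → (S j).verts ∩ (S k).verts = ∅) ∧
    (∀ n, (q n).Nodup) ∧
    (∀ m n, m ≠ n → ∀ v ∈ q m, v ∉ q n) ∧
    (∀ n, ∀ v ∈ q n, ∀ k, v ∉ (S k).verts) ∧
    (∀ k, L k ∈ (S k).verts ∧ R k ∈ (S k).verts ∧ B k ∈ (S k).verts) ∧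
    (∀ k, (¬ ∃ n, α n = k ∧ 1 ≤ k) → ∃ v, S k = single v) ∧
    (∀ n, 1 ≤ α n → ∃ a b c, a ≠ b ∧ b ≠ c ∧ a ≠ c ∧ S (α n) = triangle a b c) ∧
    (∀ n, 1 ≤ α n → q n ≠ [] →
      L (α n) ≠ R (α n) ∧ L (α n) ≠ B (α n) ∧ R (α n) ≠ B (α n)) ∧
    (∀ n, 1 ≤ α n → q n = [] →
      t n ∈ (S (α n)).verts ∧ L (α n) ≠ R (α n) ∧ t n ≠ L (α n) ∧ t n ≠ R (α n)) ∧
    (∀ n, q n ≠ [] → (q n).getLast? = some (t n)) ∧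
    (∀ n, α n = 0 → q n = [] → t n ∈ (S 0).verts) ∧
    G = iUnion S ∪ iUnion (fun k => linkBoth (R k) (L (k + 1))) ∪
        iUnion (fun n => branchGraph (B (α n)) (q n)) ∧
    teeth = Set.range t

/-- `G` is shaped by a comb, with set of teeth `teeth`. -/
def IsShapedByComb (G : DGraph V) (teeth : Set V) : Prop :=
  IsDComb G teeth ∨ IsTriangleComb G teeth

/-- The core of a chain of triangles: triangles `a i, b i, c i` together with
the edges `(a (i+1), a i)` and `(c i, c (i+1))`. -/
def chainCore (a b c : ℕ → V) : DGraph V :=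
  ⟨Set.range a ∪ Set.range b ∪ Set.range c,
   {e | ∃ i, e = (a i, b i) ∨ e = (b i, c i) ∨ e = (c i, a i) ∨
        e = (a (i + 1), a i) ∨ e = (c i, c (i + 1))}⟩

/-- `G` is a chain of triangles with set of teeth `teeth`. -/
def IsChainOfTriangles (G : DGraph V) (teeth : Set V) : Prop :=
  ∃ (a b c : ℕ → V) (q : ℕ → List V),
    (Function.Injective fun p : ℕ × Fin 3 => ![a, b, c] p.2 p.1) ∧
    (∀ i, (q i).Nodup ∧ (q i).head? = some (b i)) ∧
    (∀ i, ∀ v ∈ (q i).tail, ∀ j, v ≠ a j ∧ v ≠ b j ∧ v ≠ c j) ∧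
    (∀ i j, i ≠ j → ∀ v ∈ q i, v ∉ q j) ∧
    G = chainCore a b c ∪ iUnion (fun i => doubleOfList (q i)) ∧
    teeth = {v | ∃ i, (q i).getLast? = some v}

/-- `G` is a subdivided in-star with centre (root) `c` and all edges directed
towards `c`; it has infinitely many leaves and `teeth` is its set of leaves. -/
def IsSubdividedInStar (G : DGraph V) (teeth : Set V) : Prop :=
  ∃ (c : V) (q : ℕ → List V),
    (∀ n, (q n).Nodup ∧ (q n).getLast? = some c ∧ 2 ≤ (q n).length) ∧
    (∀ m n, m ≠ n → ∀ v, v ∈ q m → v ∈ q n → v = c) ∧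
    G = iUnion (fun n => ofList (q n)) ∧
    teeth = {v | ∃ n, (q n).head? = some v}

/-- `G` is a subdivided out-star. -/
def IsSubdividedOutStar (G : DGraph V) (teeth : Set V) : Prop :=
  IsSubdividedInStar G.reverse teeth

/-- `G = 𝒟(K_{1,∞})`. -/
def IsDInfiniteStar (G : DGraph V) : Prop :=
  ∃ (c : V) (g : ℕ → V), Function.Injective g ∧ (∀ n, g n ≠ c) ∧
    G = ⟨insert c (Set.range g), {e | ∃ n, e = (c, g n) ∨ e = (g n, c)}⟩

/-- `G = 𝒟(R)` for an undirected ray `R`. -/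
def IsDoubleRayGraph (G : DGraph V) : Prop :=
  ∃ f : ℕ → V, Function.Injective f ∧ G = doubleRay f

/-- `G` is a subdivision of a dominated directed ray (parallel edges being
collapsed): the ray `f`, its original vertices sitting at the positions
`α n ≥ 1`, and for each `n` a subdivided dominating edge `p n`. -/
def IsSubdivDominatedRay (G : DGraph V) : Prop :=
  (∃ (f : ℕ → V) (α : ℕ → ℕ) (p : ℕ → List V),
    Function.Injective f ∧ StrictMono α ∧ (∀ n, 1 ≤ α n) ∧
    (∀ n, (p n).Nodup ∧ (p n).head? = some (f (α n)) ∧ (p n).getLast? = some (f 0) ∧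
      2 ≤ (p n).length) ∧
    (∀ n, ∀ v ∈ internals (p n), v ∉ Set.range f) ∧
    (∀ m n, m ≠ n → ∀ v ∈ internals (p m), v ∉ p n) ∧
    G = outRay f ∪ iUnion (fun n => ofList (p n))) ∨
  (∃ (f : ℕ → V) (α : ℕ → ℕ) (p : ℕ → List V),
    Function.Injective f ∧ StrictMono α ∧ (∀ n, 1 ≤ α n) ∧
    (∀ n, (p n).Nodup ∧ (p n).head? = some (f 0) ∧ (p n).getLast? = some (f (α n)) ∧
      2 ≤ (p n).length) ∧
    (∀ n, ∀ v ∈ internals (p n), v ∉ Set.range f) ∧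
    (∀ m n, m ≠ n → ∀ v ∈ internals (p m), v ∉ p n) ∧
    G = inRay f ∪ iUnion (fun n => ofList (p n)))

section Laced

variable [DecidableEq V]

/-- The segment of the path `l` from `x` to `y` (inclusive). -/
def seg (l : List V) (x y : V) : List V :=
  (l.drop (l.idxOf x)).take (l.idxOf y + 1 - l.idxOf x)

/-- `x ≤ y` along the path `l`. -/
def leIn (l : List V) (x y : V) : Prop :=
  x ∈ l ∧ y ∈ l ∧ l.idxOf x ≤ l.idxOf y

/-- `x < y` along the path `l`. -/
def ltIn (l : List V) (x y : V) : Prop :=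
  x ∈ l ∧ y ∈ l ∧ l.idxOf x < l.idxOf y

/-- The directed paths `P` and `Q` are laced. -/
def Laced (P Q : List V) : Prop :=
  (∀ v ∈ P, v ∉ Q) ∨
  ∃ (ℓ : ℕ) (x y : ℕ → V), 1 ≤ ℓ ∧
    (∀ i, 1 ≤ i → i ≤ ℓ → leIn P (x i) (y i) ∧ leIn Q (x i) (y i)) ∧
    (∀ i, 1 ≤ i → i < ℓ → ltIn P (y i) (x (i + 1)) ∧ ltIn Q (y (i + 1)) (x i)) ∧
    (∀ i, 1 ≤ i → i ≤ ℓ → seg P (x i) (y i) = seg Q (x i) (y i)) ∧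
    (∀ i, 1 ≤ i → i < ℓ → ∀ v ∈ internals (seg Q (y (i + 1)) (x i)), v ∉ P) ∧
    (∀ v ∈ Q.take (Q.idxOf (x ℓ) + 1), v ∈ P → v = x ℓ) ∧
    (∀ v ∈ Q.drop (Q.idxOf (y 1)), v ∈ P → v = y 1)

end Laced

/-- The out-ray `f` and the in-ray `g` with common root are knit:
`x i = f (p i) = g (p' i)` and `y i = f (q i) = g (q' i)` are the shared
segments, in the orders required in the paper. -/
def Knit (f g : ℕ → V) : Prop :=
  f 0 = g 0 ∧
  ∃ p q p' q' : ℕ → ℕ,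
    (∀ i, 0 < p i ∧ p i ≤ q i ∧ q i < p (i + 1)) ∧
    (∀ i, 0 < q' i ∧ q' i ≤ p' i ∧ p' i < q' (i + 1)) ∧
    (∀ i, q i - p i = p' i - q' i) ∧
    (∀ i, ∀ k ≤ q i - p i, f (p i + k) = g (p' i - k)) ∧
    (∀ i, ∀ m, p' i < m → m < q' (i + 1) → g m ∉ Set.range f) ∧
    (∀ m, 0 < m → m < q' 0 → g m ∉ Set.range f)

section Contract

variable [DecidableEq V]

/-- The map identifying `v` with `u`. -/
def contractFun (u v : V) : V → V := fun x => if x = v then u else x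

/-- Contracting the edge `(u, v)` of `G` onto the vertex `u`. -/
def contractEdge (G : DGraph V) (u v : V) : DGraph V :=
  ⟨contractFun u v '' G.verts,
   {e | e ≠ (u, u) ∧ ∃ e' ∈ G.edges, e = (contractFun u v e'.1, contractFun u v e'.2)}⟩

end Contract

/-- The edge `(u, v)` of `G` is butterfly contractible. -/
def IsButterflyContractibleEdge (G : DGraph V) (u v : V) : Prop :=
  (u, v) ∈ G.edges ∧
  ((∀ w, (u, w) ∈ G.edges → w = v) ∨ (∀ w, (w, v) ∈ G.edges → w = u))

/-- `G` and `H` are isomorphic directed graphs. -/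
def Isom (G H : DGraph V) : Prop :=
  ∃ φ : V → V, Set.BijOn φ G.verts H.verts ∧
    ∀ u ∈ G.verts, ∀ v ∈ G.verts, ((u, v) ∈ G.edges ↔ (φ u, φ v) ∈ H.edges)

end DGraph


/-! ### Auxiliary lemmas for Statement 19 -/

section ChainAux

namespace DGraph

variable {V : Type u}

theorem zip_tail_iff {l : List V} {x y : V} :
    (x, y) ∈ l.zip l.tail ↔ ∃ s t : List V, l = s ++ x :: y :: t := by
  induction l with
  | nil =>
      simp only [List.zip_nil_left, List.not_mem_nil, false_iff]
      rintro ⟨s, t, h⟩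
      cases s <;> simp at h
  | cons a l ih =>
      cases l with
      | nil =>
          simp only [List.tail_cons, List.zip_nil_right, List.not_mem_nil, false_iff]
          rintro ⟨s, t, h⟩
          rcases s with _ | ⟨u, s⟩
          · simp at h
          · simp only [List.cons_append, List.cons.injEq] at h
            rcases h with ⟨rfl, h⟩
            cases s <;> simp at h
      | cons b l' =>
          constructor
          · intro h
            simp only [List.tail_cons, List.zip_cons_cons, List.mem_cons] at h
            rcases h with h | h
            · obtain ⟨rfl, rfl⟩ := Prod.mk.injEq .. ▸ h
              exact ⟨[], l', by simp⟩
            · obtain ⟨s, t, hst⟩ := ih.1 (by simpa using h)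
              exact ⟨a :: s, t, by simp [hst]⟩
          · rintro ⟨s, t, hst⟩
            rcases s with _ | ⟨u, s⟩
            · simp only [List.nil_append, List.cons.injEq] at hst
              obtain ⟨rfl, hst⟩ := hst
              obtain ⟨rfl, _⟩ := List.cons.injEq .. ▸ hst
              simp
            · simp only [List.cons_append, List.cons.injEq] at hst
              obtain ⟨rfl, hst⟩ := hst
              have : (x, y) ∈ (b :: l').zip (b :: l').tail := ih.2 ⟨s, t, hst⟩
              simp only [List.tail_cons, List.zip_cons_cons, List.mem_cons]
              right
              simpa using this

theorem mem_zip_tail {l : List V} {x y : V} (h : (x, y) ∈ l.zip l.tail) :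
    x ∈ l ∧ y ∈ l := by
  obtain ⟨s, t, rfl⟩ := zip_tail_iff.1 h
  constructor <;> simp

theorem zip_tail_reverse {l : List V} {x y : V} :
    (x, y) ∈ l.reverse.zip l.reverse.tail ↔ (y, x) ∈ l.zip l.tail := by
  rw [zip_tail_iff, zip_tail_iff]
  constructor
  · rintro ⟨s, t, h⟩
    refine ⟨t.reverse, s.reverse, ?_⟩
    have := congrArg List.reverse h
    simpa using this
  · rintro ⟨s, t, h⟩
    refine ⟨t.reverse, s.reverse, ?_⟩
    have := congrArg List.reverse h
    simpa using this

/-- Discrete intermediate value theorem on a list. -/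
theorem exists_step (P : V → Prop) :
    ∀ {l : List V} {x y : V}, l.head? = some x → l.getLast? = some y →
      ¬ P x → P y → ∃ p q, (p, q) ∈ l.zip l.tail ∧ ¬ P p ∧ P q := by
  intro l
  induction l with
  | nil => intro x y h; simp at h
  | cons a t ih =>
      intro x y hh hl hx hy
      simp only [List.head?_cons, Option.some.injEq] at hh
      subst hh
      cases t with
      | nil =>
          simp only [List.getLast?_singleton, Option.some.injEq] at hl
          subst hl; exact absurd hy hx
      | cons b t' =>
          by_cases hb : P b
          · exact ⟨a, b, by simp, hx, hb⟩
          · have hl' : (b :: t').getLast? = some y := by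
              rwa [List.getLast?_cons_cons] at hl
            obtain ⟨p, q, hpq, hp, hq⟩ := ih (x := b) (y := y) rfl hl' hb hy
            exact ⟨p, q, by simp only [List.tail_cons, List.zip_cons_cons,
              List.mem_cons]; right; simpa using hpq, hp, hq⟩

/-- Every non-head element of a list has a predecessor pair. -/
theorem exists_pred : ∀ {l : List V} {v : V}, v ∈ l → l.head? ≠ some v →
    ∃ z, (z, v) ∈ l.zip l.tail := by
  intro l
  induction l with
  | nil => intro v h; simp at h
  | cons a t ih =>
      intro v hv hh
      have hva : v ≠ a := fun h => hh (by simp [h])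
      have hvt : v ∈ t := by
        rcases List.mem_cons.1 hv with h | h
        · exact absurd h hva
        · exact h
      cases t with
      | nil => simp at hvt
      | cons b t' =>
          by_cases hvb : v = b
          · exact ⟨a, by simp [hvb]⟩
          · have hh' : (b :: t').head? ≠ some v := by
              simp only [List.head?_cons, ne_eq, Option.some.injEq]
              exact fun h => hvb h.symm
            obtain ⟨z, hz⟩ := ih hvt hh'
            refine ⟨z, ?_⟩
            simp only [List.tail_cons, List.zip_cons_cons, List.mem_cons]
            right
            simpa using hz

@[simp] theorem reverse_reverse (G : DGraph V) : G.reverse.reverse = G := by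
  cases G with
  | mk vs es => simp [reverse]

theorem IsPathFrom.rev {G : DGraph V} {a b : V} {l : List V}
    (h : IsPathFrom G.reverse a b l) : IsPathFrom G b a l.reverse := by
  obtain ⟨⟨hne, hnd, hverts, hedges⟩, hh, hl⟩ := h
  refine ⟨⟨by simpa using hne, by simpa using hnd, ?_, ?_⟩, ?_, ?_⟩
  · intro v hv
    exact hverts v (by simpa using hv)
  · rintro ⟨p, q⟩ hpq
    have : (q, p) ∈ l.zip l.tail := zip_tail_reverse.1 hpq
    exact hedges _ this
  · rwa [List.head?_reverse]
  · rwa [List.getLast?_reverse]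

theorem IsOutArborescence.reaches {T : DGraph V} {r x : V}
    (h : IsOutArborescence T r) (hx : x ∈ T.verts) :
    ∃ l, IsPathFrom T r x l := by
  obtain ⟨l, hl⟩ := h.2.2.2.2 x hx
  exact ⟨l.reverse, hl.rev⟩

theorem IsInArborescence.reaches {T : DGraph V} {r x : V}
    (h : IsInArborescence T r) (hx : x ∈ T.verts) :
    ∃ l, IsPathFrom T x r l := h.2.2.2.2 x hx

theorem sub_trans {A B C : DGraph V} (h1 : A ⊆ B) (h2 : B ⊆ C) : A ⊆ C :=
  ⟨h1.1.trans h2.1, h1.2.trans h2.2⟩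

theorem left_sub_union {A B : DGraph V} : A ⊆ A ∪ B :=
  ⟨Set.subset_union_left, Set.subset_union_left⟩

theorem right_sub_union {A B : DGraph V} : B ⊆ A ∪ B :=
  ⟨Set.subset_union_right, Set.subset_union_right⟩

theorem IsPath.sub {G G' : DGraph V} {l : List V} (h : IsPath G l) (hs : G ⊆ G') :
    IsPath G' l :=
  ⟨h.1, h.2.1, fun v hv => hs.1 (h.2.2.1 v hv), fun e he => hs.2 (h.2.2.2 e he)⟩

theorem IsPathFrom.sub {G G' : DGraph V} {a b : V} {l : List V}
    (h : IsPathFrom G a b l) (hs : G ⊆ G') : IsPathFrom G' a b l :=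
  ⟨h.1.sub hs, h.2.1, h.2.2⟩

theorem IsPathFrom.head_mem {G : DGraph V} {a b : V} {l : List V}
    (h : IsPathFrom G a b l) : a ∈ l :=
  List.mem_of_mem_head? (by rw [h.2.1]; simp)

theorem IsPathFrom.last_mem {G : DGraph V} {a b : V} {l : List V}
    (h : IsPathFrom G a b l) : b ∈ l :=
  List.mem_of_getLast? h.2.2


@[simp] theorem union_verts (G H : DGraph V) : (G ∪ H).verts = G.verts ∪ H.verts := rfl
@[simp] theorem union_edges (G H : DGraph V) : (G ∪ H).edges = G.edges ∪ H.edges := rfl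
@[simp] theorem reverse_verts (G : DGraph V) : G.reverse.verts = G.verts := rfl
theorem mem_reverse_edges {G : DGraph V} {e : V × V} :
    e ∈ G.reverse.edges ↔ (e.2, e.1) ∈ G.edges := Iff.rfl
@[simp] theorem iUnion_verts {ι : Type} (f : ι → DGraph V) :
    (iUnion f).verts = ⋃ i, (f i).verts := rfl
@[simp] theorem iUnion_edges {ι : Type} (f : ι → DGraph V) :
    (iUnion f).edges = ⋃ i, (f i).edges := rfl

/-- Bundled data of a chain of triangles. -/
structure ChainData (V : Type u) where
  D : DGraph V
  a : ℕ → V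
  b : ℕ → V
  c : ℕ → V
  q : ℕ → List V
  inj : Function.Injective fun p : ℕ × Fin 3 => ![a, b, c] p.2 p.1
  hnd : ∀ i, (q i).Nodup
  hhead : ∀ i, (q i).head? = some (b i)
  htail : ∀ i, ∀ v ∈ (q i).tail, ∀ j, v ≠ a j ∧ v ≠ b j ∧ v ≠ c j
  hdisj : ∀ i j, i ≠ j → ∀ v ∈ q i, v ∉ q j
  hD : D = chainCore a b c ∪ iUnion (fun i => doubleOfList (q i))

namespace ChainData

variable {V : Type u} (C : ChainData V)

theorem abc_inj {i j : ℕ} {s t : Fin 3} (h : ![C.a, C.b, C.c] s i = ![C.a, C.b, C.c] t j) :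
    i = j ∧ s = t := by
  have h2 := C.inj (a₁ := (i, s)) (a₂ := (j, t)) h
  exact Prod.ext_iff.1 h2

theorem a_eq {i j : ℕ} (h : C.a i = C.a j) : i = j :=
  (C.abc_inj (s := 0) (t := 0) (by simpa using h)).1

theorem b_eq {i j : ℕ} (h : C.b i = C.b j) : i = j :=
  (C.abc_inj (s := 1) (t := 1) (by simpa using h)).1

theorem c_eq {i j : ℕ} (h : C.c i = C.c j) : i = j :=
  (C.abc_inj (s := 2) (t := 2) (by simpa using h)).1

theorem a_ne_b {i j : ℕ} : C.a i ≠ C.b j := fun h => by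
  have := (C.abc_inj (s := 0) (t := 1) (by simpa using h)).2
  simp at this

theorem a_ne_c {i j : ℕ} : C.a i ≠ C.c j := fun h => by
  have := (C.abc_inj (s := 0) (t := 2) (by simpa using h)).2
  simp at this

theorem b_ne_c {i j : ℕ} : C.b i ≠ C.c j := fun h => by
  have := (C.abc_inj (s := 1) (t := 2) (by simpa using h)).2
  simp at this

theorem q_cons (i : ℕ) : ∃ t, C.q i = C.b i :: t :=
  List.head?_eq_some_iff.1 (C.hhead i)

theorem mem_q_iff {i : ℕ} {v : V} : v ∈ C.q i ↔ v = C.b i ∨ v ∈ (C.q i).tail := by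
  obtain ⟨t, ht⟩ := C.q_cons i
  rw [ht]; simp

theorem a_not_mem_q {i j : ℕ} : C.a j ∉ C.q i := by
  rw [C.mem_q_iff]
  rintro (h | h)
  · exact C.a_ne_b h
  · exact (C.htail i _ h j).1 rfl

theorem c_not_mem_q {i j : ℕ} : C.c j ∉ C.q i := by
  rw [C.mem_q_iff]
  rintro (h | h)
  · exact C.b_ne_c h.symm
  · exact (C.htail i _ h j).2.2 rfl

theorem b_mem_q {i j : ℕ} (h : C.b j ∈ C.q i) : j = i := by
  rw [C.mem_q_iff] at h
  rcases h with h | h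
  · exact C.b_eq h
  · exact absurd rfl (C.htail i _ h j).2.1

theorem q_eq_of_mem {i j : ℕ} {v : V} (h1 : v ∈ C.q i) (h2 : v ∈ C.q j) : i = j := by
  by_contra hne
  exact C.hdisj i j hne _ h1 h2

/-- `v` lies in column `i`. -/
def colP (i : ℕ) (v : V) : Prop :=
  v = C.a i ∨ v = C.b i ∨ v = C.c i ∨ v ∈ C.q i

theorem colP_a (i : ℕ) : C.colP i (C.a i) := Or.inl rfl
theorem colP_b (i : ℕ) : C.colP i (C.b i) := Or.inr (Or.inl rfl)
theorem colP_c (i : ℕ) : C.colP i (C.c i) := Or.inr (Or.inr (Or.inl rfl))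
theorem colP_of_mem_q {i : ℕ} {v : V} (h : v ∈ C.q i) : C.colP i v :=
  Or.inr (Or.inr (Or.inr h))

theorem col_unique {i j : ℕ} {v : V} (h1 : C.colP i v) (h2 : C.colP j v) : i = j := by
  rcases h1 with rfl | rfl | rfl | h1
  · rcases h2 with h | h | h | h
    · exact C.a_eq h
    · exact absurd h C.a_ne_b
    · exact absurd h C.a_ne_c
    · exact absurd h C.a_not_mem_q
  · rcases h2 with h | h | h | h
    · exact absurd h.symm C.a_ne_b
    · exact C.b_eq h
    · exact absurd h C.b_ne_c
    · exact C.b_mem_q h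
  · rcases h2 with h | h | h | h
    · exact absurd h.symm C.a_ne_c
    · exact absurd h.symm C.b_ne_c
    · exact C.c_eq h
    · exact absurd h C.c_not_mem_q
  · rcases h2 with rfl | rfl | rfl | h2
    · exact absurd h1 C.a_not_mem_q
    · exact (C.b_mem_q h1).symm
    · exact absurd h1 C.c_not_mem_q
    · exact C.q_eq_of_mem h1 h2

theorem verts_iff {v : V} : v ∈ C.D.verts ↔ ∃ i, C.colP i v := by
  rw [C.hD]
  simp only [union_verts, Set.mem_union, iUnion_verts, Set.mem_iUnion]
  constructor
  · rintro (h | h)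
    · rcases h with (⟨i, hi⟩ | ⟨i, hi⟩) | ⟨i, hi⟩
      · exact ⟨i, Or.inl hi.symm⟩
      · exact ⟨i, Or.inr (Or.inl hi.symm)⟩
      · exact ⟨i, Or.inr (Or.inr (Or.inl hi.symm))⟩
    · obtain ⟨i, hi⟩ := h
      refine ⟨i, C.colP_of_mem_q ?_⟩
      rcases hi with hi | hi <;> exact hi
  · rintro ⟨i, (rfl | rfl | rfl | h)⟩
    · exact Or.inl (Or.inl (Or.inl ⟨i, rfl⟩))
    · exact Or.inl (Or.inl (Or.inr ⟨i, rfl⟩))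
    · exact Or.inl (Or.inr ⟨i, rfl⟩)
    · exact Or.inr ⟨i, Or.inl h⟩

theorem edges_iff {e : V × V} : e ∈ C.D.edges ↔
    (∃ i, e = (C.a i, C.b i) ∨ e = (C.b i, C.c i) ∨ e = (C.c i, C.a i) ∨
      e = (C.a (i + 1), C.a i) ∨ e = (C.c i, C.c (i + 1))) ∨
    (∃ i, e ∈ (C.q i).zip (C.q i).tail ∨ (e.2, e.1) ∈ (C.q i).zip (C.q i).tail) := by
  rw [C.hD]
  simp only [union_edges, Set.mem_union, iUnion_edges, Set.mem_iUnion]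
  constructor
  · rintro (h | ⟨i, hi⟩)
    · exact Or.inl h
    · exact Or.inr ⟨i, hi⟩
  · rintro (h | ⟨i, hi⟩)
    · exact Or.inl h
    · exact Or.inr ⟨i, hi⟩

open Classical in
/-- The column of a vertex. -/
noncomputable def colOf (v : V) : ℕ :=
  if h : ∃ i, C.colP i v then h.choose else 0

theorem colOf_eq {i : ℕ} {v : V} (h : C.colP i v) : C.colOf v = i := by
  have hex : ∃ i, C.colP i v := ⟨i, h⟩
  rw [colOf, dif_pos hex]
  exact C.col_unique hex.choose_spec h

theorem colOf_a (i : ℕ) : C.colOf (C.a i) = i := C.colOf_eq (C.colP_a i)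
theorem colOf_b (i : ℕ) : C.colOf (C.b i) = i := C.colOf_eq (C.colP_b i)
theorem colOf_c (i : ℕ) : C.colOf (C.c i) = i := C.colOf_eq (C.colP_c i)
theorem colOf_mem_q {i : ℕ} {v : V} (h : v ∈ C.q i) : C.colOf v = i :=
  C.colOf_eq (C.colP_of_mem_q h)

theorem edge_fst_mem {e : V × V} (he : e ∈ C.D.edges) : e.1 ∈ C.D.verts := by
  rw [C.verts_iff]
  rcases C.edges_iff.1 he with ⟨i, h | h | h | h | h⟩ | ⟨i, h | h⟩
  · exact ⟨i, by rw [h]; exact C.colP_a i⟩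
  · exact ⟨i, by rw [h]; exact C.colP_b i⟩
  · exact ⟨i, by rw [h]; exact C.colP_c i⟩
  · exact ⟨i + 1, by rw [h]; exact C.colP_a (i + 1)⟩
  · exact ⟨i, by rw [h]; exact C.colP_c i⟩
  · exact ⟨i, C.colP_of_mem_q (by
      have := mem_zip_tail (l := C.q i) (x := e.1) (y := e.2) (by simpa using h)
      exact this.1)⟩
  · exact ⟨i, C.colP_of_mem_q (by
      have := mem_zip_tail (l := C.q i) (x := e.2) (y := e.1) (by simpa using h)
      exact this.2)⟩

/-- The only rightward edge over the cut `k` is `(c k, c (k+1))`. -/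
theorem cross_right_char {e : V × V} {k : ℕ} (he : e ∈ C.D.edges)
    (h1 : C.colOf e.1 ≤ k) (h2 : k < C.colOf e.2) : e = (C.c k, C.c (k + 1)) := by
  rcases C.edges_iff.1 he with ⟨i, h | h | h | h | h⟩ | ⟨i, h | h⟩
  · rw [h] at h1 h2; simp [C.colOf_a, C.colOf_b] at h1 h2; omega
  · rw [h] at h1 h2; simp [C.colOf_b, C.colOf_c] at h1 h2; omega
  · rw [h] at h1 h2; simp [C.colOf_a, C.colOf_c] at h1 h2; omega
  · rw [h] at h1 h2; simp [C.colOf_a] at h1 h2; omega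
  · rw [h] at h1 h2
    simp only [C.colOf_c] at h1 h2
    have : i = k := by omega
    rw [h, this]
  · obtain ⟨hm1, hm2⟩ := mem_zip_tail (l := C.q i) (x := e.1) (y := e.2) (by simpa using h)
    have e1 := C.colOf_mem_q hm1
    have e2 := C.colOf_mem_q hm2
    omega
  · obtain ⟨hm2, hm1⟩ := mem_zip_tail (l := C.q i) (x := e.2) (y := e.1) (by simpa using h)
    have e1 := C.colOf_mem_q hm1
    have e2 := C.colOf_mem_q hm2
    omega

/-- The only leftward edge over the cut `k` is `(a (k+1), a k)`. -/
theorem cross_left_char {e : V × V} {k : ℕ} (he : e ∈ C.D.edges)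
    (h1 : C.colOf e.2 ≤ k) (h2 : k < C.colOf e.1) : e = (C.a (k + 1), C.a k) := by
  rcases C.edges_iff.1 he with ⟨i, h | h | h | h | h⟩ | ⟨i, h | h⟩
  · rw [h] at h1 h2; simp [C.colOf_a, C.colOf_b] at h1 h2; omega
  · rw [h] at h1 h2; simp [C.colOf_b, C.colOf_c] at h1 h2; omega
  · rw [h] at h1 h2; simp [C.colOf_a, C.colOf_c] at h1 h2; omega
  · rw [h] at h1 h2
    simp only [C.colOf_a] at h1 h2
    have : i = k := by omega
    rw [h, this]
  · rw [h] at h1 h2; simp [C.colOf_c] at h1 h2; omega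
  · obtain ⟨hm1, hm2⟩ := mem_zip_tail (l := C.q i) (x := e.1) (y := e.2) (by simpa using h)
    have e1 := C.colOf_mem_q hm1
    have e2 := C.colOf_mem_q hm2
    omega
  · obtain ⟨hm2, hm1⟩ := mem_zip_tail (l := C.q i) (x := e.2) (y := e.1) (by simpa using h)
    have e1 := C.colOf_mem_q hm1
    have e2 := C.colOf_mem_q hm2
    omega

/-- The only edges of `D` into `a j` come from `c j` or `a (j+1)`. -/
theorem pred_of_a {z : V} {j : ℕ} (he : (z, C.a j) ∈ C.D.edges) :
    z = C.c j ∨ z = C.a (j + 1) := by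
  rcases C.edges_iff.1 he with ⟨i, h | h | h | h | h⟩ | ⟨i, h | h⟩
  · have h2 : C.a j = C.b i := by simpa using congrArg Prod.snd h
    exact absurd h2 C.a_ne_b
  · have h2 : C.a j = C.c i := by simpa using congrArg Prod.snd h
    exact absurd h2 C.a_ne_c
  · have h2 : C.a j = C.a i := by simpa using congrArg Prod.snd h
    have h1 : z = C.c i := by simpa using congrArg Prod.fst h
    rw [← C.a_eq h2] at h1
    exact Or.inl h1
  · have h2 : C.a j = C.a i := by simpa using congrArg Prod.snd h
    have h1 : z = C.a (i + 1) := by simpa using congrArg Prod.fst h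
    rw [← C.a_eq h2] at h1
    exact Or.inr h1
  · have h2 : C.a j = C.c (i + 1) := by simpa using congrArg Prod.snd h
    exact absurd h2 C.a_ne_c
  · obtain ⟨_, hm2⟩ := mem_zip_tail (l := C.q i) (x := z) (y := C.a j) (by simpa using h)
    exact absurd hm2 C.a_not_mem_q
  · obtain ⟨hm2, _⟩ := mem_zip_tail (l := C.q i) (x := C.a j) (y := z) (by simpa using h)
    exact absurd hm2 C.a_not_mem_q

/-- The only edge of `D` leaving the branch `q i` is `(b i, c i)`. -/
theorem q_exit {x z : V} {i : ℕ} (he : (x, z) ∈ C.D.edges) (hx : x ∈ C.q i)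
    (hz : z ∉ C.q i) : x = C.b i ∧ z = C.c i := by
  rcases C.edges_iff.1 he with ⟨j, h | h | h | h | h⟩ | ⟨j, h | h⟩
  · have h1 : x = C.a j := by simpa using congrArg Prod.fst h
    exact absurd (h1 ▸ hx) C.a_not_mem_q
  · have h1 : x = C.b j := by simpa using congrArg Prod.fst h
    have h2 : z = C.c j := by simpa using congrArg Prod.snd h
    have : j = i := C.b_mem_q (h1 ▸ hx)
    subst this
    exact ⟨h1, h2⟩
  · have h1 : x = C.c j := by simpa using congrArg Prod.fst h
    exact absurd (h1 ▸ hx) C.c_not_mem_q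
  · have h1 : x = C.a (j + 1) := by simpa using congrArg Prod.fst h
    exact absurd (h1 ▸ hx) C.a_not_mem_q
  · have h1 : x = C.c j := by simpa using congrArg Prod.fst h
    exact absurd (h1 ▸ hx) C.c_not_mem_q
  · obtain ⟨hm1, hm2⟩ := mem_zip_tail (l := C.q j) (x := x) (y := z) (by simpa using h)
    have := C.q_eq_of_mem hx hm1
    exact absurd (this ▸ hz) (by simpa using hm2)
  · obtain ⟨hm2, hm1⟩ := mem_zip_tail (l := C.q j) (x := z) (y := x) (by simpa using h)
    have := C.q_eq_of_mem hx hm1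
    exact absurd (this ▸ hz) (by simpa using hm2)

/-- The only edge of `D` entering the branch `q i` is `(a i, b i)`. -/
theorem q_entry {x z : V} {i : ℕ} (he : (x, z) ∈ C.D.edges) (hx : x ∉ C.q i)
    (hz : z ∈ C.q i) : x = C.a i ∧ z = C.b i := by
  rcases C.edges_iff.1 he with ⟨j, h | h | h | h | h⟩ | ⟨j, h | h⟩
  · have h1 : x = C.a j := by simpa using congrArg Prod.fst h
    have h2 : z = C.b j := by simpa using congrArg Prod.snd h
    have : j = i := C.b_mem_q (h2 ▸ hz)
    subst this
    exact ⟨h1, h2⟩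
  · have h2 : z = C.c j := by simpa using congrArg Prod.snd h
    exact absurd (h2 ▸ hz) C.c_not_mem_q
  · have h2 : z = C.a j := by simpa using congrArg Prod.snd h
    exact absurd (h2 ▸ hz) C.a_not_mem_q
  · have h2 : z = C.a j := by simpa using congrArg Prod.snd h
    exact absurd (h2 ▸ hz) C.a_not_mem_q
  · have h2 : z = C.c (j + 1) := by simpa using congrArg Prod.snd h
    exact absurd (h2 ▸ hz) C.c_not_mem_q
  · obtain ⟨hm1, hm2⟩ := mem_zip_tail (l := C.q j) (x := x) (y := z) (by simpa using h)
    have := C.q_eq_of_mem hz hm2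
    exact absurd (this ▸ hx) (by simpa using hm1)
  · obtain ⟨hm2, hm1⟩ := mem_zip_tail (l := C.q j) (x := z) (y := x) (by simpa using h)
    have := C.q_eq_of_mem hz hm2
    exact absurd (this ▸ hx) (by simpa using hm1)

/-- Crossing lemma, rightward: a path within a subgraph of `D` from column
`≤ k` to column `> k` contains `c k` and `c (k+1)`. -/
theorem cross_right {G : DGraph V} (hG : G ⊆ C.D) {x y : V} {l : List V} {k : ℕ}
    (hp : IsPathFrom G x y l) (hx : C.colOf x ≤ k) (hy : k < C.colOf y) :
    C.c k ∈ G.verts ∧ C.c (k + 1) ∈ G.verts := by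
  obtain ⟨p, r, hpr, hpP, hrP⟩ := exists_step (fun v => k < C.colOf v)
    hp.2.1 hp.2.2 (by omega) hy
  have hedge : (p, r) ∈ G.edges := hp.1.2.2.2 _ hpr
  have := C.cross_right_char (hG.2 hedge) (by simpa using Nat.le_of_not_lt hpP) (by simpa using hrP)
  obtain ⟨hm1, hm2⟩ := mem_zip_tail hpr
  have h1 : p = C.c k := by simpa using congrArg Prod.fst this
  have h2 : r = C.c (k + 1) := by simpa using congrArg Prod.snd this
  exact ⟨h1 ▸ hp.1.2.2.1 p hm1, h2 ▸ hp.1.2.2.1 r hm2⟩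

/-- Crossing lemma, leftward. -/
theorem cross_left {G : DGraph V} (hG : G ⊆ C.D) {x y : V} {l : List V} {k : ℕ}
    (hp : IsPathFrom G x y l) (hx : k < C.colOf x) (hy : C.colOf y ≤ k) :
    C.a (k + 1) ∈ G.verts ∧ C.a k ∈ G.verts := by
  obtain ⟨p, r, hpr, hpP, hrP⟩ := exists_step (fun v => C.colOf v ≤ k)
    hp.2.1 hp.2.2 (by omega) hy
  have hedge : (p, r) ∈ G.edges := hp.1.2.2.2 _ hpr
  have := C.cross_left_char (hG.2 hedge) (by simpa using hrP) (by simpa using Nat.lt_of_not_le hpP)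
  obtain ⟨hm1, hm2⟩ := mem_zip_tail hpr
  have h1 : p = C.a (k + 1) := by simpa using congrArg Prod.fst this
  have h2 : r = C.a k := by simpa using congrArg Prod.snd this
  exact ⟨h1 ▸ hp.1.2.2.1 p hm1, h2 ▸ hp.1.2.2.1 r hm2⟩

theorem q_ne_nil (i : ℕ) : C.q i ≠ [] := by
  obtain ⟨t, ht⟩ := C.q_cons i
  simp [ht]

/-- The tooth at column `i`. -/
noncomputable def tooth (i : ℕ) : V := (C.q i).getLast (C.q_ne_nil i)

theorem tooth_mem (i : ℕ) : C.tooth i ∈ C.q i := List.getLast_mem _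

theorem tooth_last? (i : ℕ) : (C.q i).getLast? = some (C.tooth i) :=
  List.getLast?_eq_getLast _

theorem tooth_inj {i j : ℕ} (h : C.tooth i = C.tooth j) : i = j :=
  C.q_eq_of_mem (C.tooth_mem i) (h ▸ C.tooth_mem j)

theorem colP_tooth (i : ℕ) : C.colP i (C.tooth i) := C.colP_of_mem_q (C.tooth_mem i)

theorem colOf_tooth (i : ℕ) : C.colOf (C.tooth i) = i := C.colOf_eq (C.colP_tooth i)

end ChainData


section ModelLemmas

variable {V : Type u} (C : ChainData V) {D' : DGraph V} (M : TreeLikeModel C.D D')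

theorem tin_sub_bag {v : V} (hv : v ∈ D'.verts) : M.tin v ⊆ M.bag v := by
  rw [M.bag_eq v hv]; exact left_sub_union

theorem tout_sub_bag {v : V} (hv : v ∈ D'.verts) : M.tout v ⊆ M.bag v := by
  rw [M.bag_eq v hv]; exact right_sub_union

theorem tin_sub_D {v : V} (hv : v ∈ D'.verts) : M.tin v ⊆ C.D :=
  sub_trans (tin_sub_bag C M hv) (M.bag_sub v hv)

theorem tout_sub_D {v : V} (hv : v ∈ D'.verts) : M.tout v ⊆ C.D :=
  sub_trans (tout_sub_bag C M hv) (M.bag_sub v hv)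

theorem mem_bag_self {v : V} (hv : v ∈ D'.verts) : v ∈ (M.bag v).verts :=
  (tin_sub_bag C M hv).1 (M.tin_arb v hv).1

theorem owner_eq {u v w : V} (hu : u ∈ D'.verts) (hv : v ∈ D'.verts)
    (hwu : w ∈ (M.bag u).verts) (hwv : w ∈ (M.bag v).verts) : u = v := by
  by_contra h
  have hd := M.bag_disjoint u hu v hv h
  exact absurd (Set.mem_inter hwu hwv) (by rw [hd]; exact Set.notMem_empty w)

theorem eq_root {v w : V} (hv : v ∈ D'.verts) (h1 : w ∈ (M.tin v).verts)
    (h2 : w ∈ (M.tout v).verts) : w = v :=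
  Set.mem_singleton_iff.1 (M.roots_eq v hv ▸ Set.mem_inter h1 h2)

include M in
theorem vert_mem_D {v : V} (hv : v ∈ D'.verts) : v ∈ C.D.verts := by
  have hs := M.bag_sub v hv
  exact hs.1 (mem_bag_self C M hv)

theorem tout_path {v x : V} (hv : v ∈ D'.verts) (hx : x ∈ (M.tout v).verts) :
    ∃ l, IsPathFrom (M.tout v) v x l := (M.tout_arb v hv).reaches hx

theorem tin_path {v x : V} (hv : v ∈ D'.verts) (hx : x ∈ (M.tin v).verts) :
    ∃ l, IsPathFrom (M.tin v) x v l := (M.tin_arb v hv).reaches hx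

/-- A single edge of `D'` crossing the cut `k` rightward: either some bag
contains both `c k` and `c (k+1)`, or the modelled edge is `(c k, c (k+1))`. -/
theorem step_right {s t : V} (hs : s ∈ D'.verts) (ht : t ∈ D'.verts)
    (hst : (s, t) ∈ D'.edges) {k : ℕ} (h1 : C.colOf s ≤ k) (h2 : k < C.colOf t) :
    (∃ u, u ∈ D'.verts ∧ C.c k ∈ (M.bag u).verts ∧ C.c (k + 1) ∈ (M.bag u).verts) ∨
    (C.c k ∈ (M.tout s).verts ∧ C.c (k + 1) ∈ (M.tin t).verts) := by
  have he := M.emap_mem _ hst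
  have hx := M.emap_tail _ hst
  have hy := M.emap_head _ hst
  by_cases hxk : k < C.colOf (M.emap (s, t)).1
  · obtain ⟨l, hl⟩ := tout_path C M hs hx
    have hcr := C.cross_right (tout_sub_D C M hs) hl h1 hxk
    exact Or.inl ⟨s, hs, (tout_sub_bag C M hs).1 hcr.1, (tout_sub_bag C M hs).1 hcr.2⟩
  · push_neg at hxk
    by_cases hyk : k < C.colOf (M.emap (s, t)).2
    · have := C.cross_right_char he hxk hyk
      refine Or.inr ⟨?_, ?_⟩
      · have : (M.emap (s, t)).1 = C.c k := by simpa using congrArg Prod.fst this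
        exact this ▸ hx
      · have : (M.emap (s, t)).2 = C.c (k + 1) := by simpa using congrArg Prod.snd this
        exact this ▸ hy
    · push_neg at hyk
      obtain ⟨l, hl⟩ := tin_path C M ht hy
      have hcr := C.cross_right (tin_sub_D C M ht) hl hyk h2
      exact Or.inl ⟨t, ht, (tin_sub_bag C M ht).1 hcr.1, (tin_sub_bag C M ht).1 hcr.2⟩

/-- A single edge of `D'` crossing the cut `k` leftward. -/
theorem step_left {s t : V} (hs : s ∈ D'.verts) (ht : t ∈ D'.verts)
    (hst : (s, t) ∈ D'.edges) {k : ℕ} (h1 : C.colOf t ≤ k) (h2 : k < C.colOf s) :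
    (∃ u, u ∈ D'.verts ∧ C.a (k + 1) ∈ (M.bag u).verts ∧ C.a k ∈ (M.bag u).verts) ∨
    (C.a (k + 1) ∈ (M.tout s).verts ∧ C.a k ∈ (M.tin t).verts) := by
  have he := M.emap_mem _ hst
  have hx := M.emap_tail _ hst
  have hy := M.emap_head _ hst
  by_cases hxk : C.colOf (M.emap (s, t)).1 ≤ k
  · obtain ⟨l, hl⟩ := tout_path C M hs hx
    have hcr := C.cross_left (tout_sub_D C M hs) hl h2 hxk
    exact Or.inl ⟨s, hs, (tout_sub_bag C M hs).1 hcr.1, (tout_sub_bag C M hs).1 hcr.2⟩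
  · push_neg at hxk
    by_cases hyk : C.colOf (M.emap (s, t)).2 ≤ k
    · have := C.cross_left_char he hyk hxk
      refine Or.inr ⟨?_, ?_⟩
      · have : (M.emap (s, t)).1 = C.a (k + 1) := by simpa using congrArg Prod.fst this
        exact this ▸ hx
      · have : (M.emap (s, t)).2 = C.a k := by simpa using congrArg Prod.snd this
        exact this ▸ hy
    · push_neg at hyk
      obtain ⟨l, hl⟩ := tin_path C M ht hy
      have hcr := C.cross_left (tin_sub_D C M ht) hl hyk h1
      exact Or.inl ⟨t, ht, (tin_sub_bag C M ht).1 hcr.1, (tin_sub_bag C M ht).1 hcr.2⟩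

/-- From a `D'`-path crossing the cut `k` rightward. -/
theorem reach_cross_right {w w' : V} {k : ℕ} (hr : Reaches D' w w')
    (h1 : C.colOf w ≤ k) (h2 : k < C.colOf w') :
    (∃ u, u ∈ D'.verts ∧ C.c k ∈ (M.bag u).verts ∧ C.c (k + 1) ∈ (M.bag u).verts) ∨
    (∃ s t, s ∈ D'.verts ∧ t ∈ D'.verts ∧ (s, t) ∈ D'.edges ∧
      C.c k ∈ (M.tout s).verts ∧ C.c (k + 1) ∈ (M.tin t).verts) := by
  obtain ⟨l, hl⟩ := hr
  obtain ⟨p, r, hpr, hp, hr'⟩ := exists_step (fun v => k < C.colOf v)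
    hl.2.1 hl.2.2 (by omega) h2
  obtain ⟨hm1, hm2⟩ := mem_zip_tail hpr
  have hpv := hl.1.2.2.1 p hm1
  have hrv := hl.1.2.2.1 r hm2
  have hedge := hl.1.2.2.2 _ hpr
  rcases step_right C M hpv hrv hedge (Nat.le_of_not_lt hp) hr' with h | h
  · exact Or.inl h
  · exact Or.inr ⟨p, r, hpv, hrv, hedge, h.1, h.2⟩

/-- From a `D'`-path crossing the cut `k` leftward. -/
theorem reach_cross_left {w w' : V} {k : ℕ} (hr : Reaches D' w w')
    (h1 : k < C.colOf w) (h2 : C.colOf w' ≤ k) :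
    (∃ u, u ∈ D'.verts ∧ C.a (k + 1) ∈ (M.bag u).verts ∧ C.a k ∈ (M.bag u).verts) ∨
    (∃ s t, s ∈ D'.verts ∧ t ∈ D'.verts ∧ (s, t) ∈ D'.edges ∧
      C.a (k + 1) ∈ (M.tout s).verts ∧ C.a k ∈ (M.tin t).verts) := by
  obtain ⟨l, hl⟩ := hr
  obtain ⟨p, r, hpr, hp, hr'⟩ := exists_step (fun v => C.colOf v ≤ k)
    hl.2.1 hl.2.2 (by omega) h2
  obtain ⟨hm1, hm2⟩ := mem_zip_tail hpr
  have hpv := hl.1.2.2.1 p hm1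
  have hrv := hl.1.2.2.1 r hm2
  have hedge := hl.1.2.2.2 _ hpr
  rcases step_left C M hpv hrv hedge hr' (Nat.lt_of_not_le hp) with h | h
  · exact Or.inl h
  · exact Or.inr ⟨p, r, hpv, hrv, hedge, h.1, h.2⟩

/-- No bag's out-arborescence can contain a tail of the `c`-ray. -/
theorem no_ctail (hsc : StronglyConnected D')
    (hteeth : ∀ N, ∃ i, N ≤ i ∧ C.tooth i ∈ D'.verts) {v : V} (hv : v ∈ D'.verts)
    {N : ℕ} (hc : ∀ m, N ≤ m → C.c m ∈ (M.tout v).verts) : False := by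
  obtain ⟨i, hiN, hiv⟩ := hteeth (max N (C.colOf v + 1))
  have hcolv : C.colOf v < i := by omega
  have hci : C.c i ∈ (M.tout v).verts := hc i (by omega)
  have hvq : v ∉ C.q i := fun h => by
    have := C.colOf_mem_q h; omega
  have hcitin : ∀ w, w ∈ D'.verts → C.c i ∈ (M.tin w).verts → False := by
    intro w hw hciw
    have hwv : w = v := owner_eq C M hw hv ((tin_sub_bag C M hw).1 hciw)
      ((tout_sub_bag C M hv).1 hci)
    subst hwv
    have hroot : C.c i = w := eq_root C M hw hciw hci
    have h2 : C.colOf w = i := by rw [← hroot]; exact C.colOf_c i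
    omega
  have hcitout : ∀ w, w ∈ D'.verts → w ∈ C.q i → C.c i ∈ (M.tout w).verts → False := by
    intro w hw hwq hciw
    have hwv : w = v := owner_eq C M hw hv ((tout_sub_bag C M hw).1 hciw)
      ((tout_sub_bag C M hv).1 hci)
    exact hvq (hwv ▸ hwq)
  -- a D'-path from the tooth in column i back to v
  obtain ⟨l, hl⟩ := hsc _ hiv _ hv
  obtain ⟨s, t, hst, hsQ, htQ⟩ := exists_step (fun w => w ∉ C.q i)
    hl.2.1 hl.2.2 (not_not_intro (C.tooth_mem i)) hvq
  have hsQ : s ∈ C.q i := not_not.1 hsQ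
  obtain ⟨hm1, hm2⟩ := mem_zip_tail hst
  have hsv := hl.1.2.2.1 s hm1
  have htv := hl.1.2.2.1 t hm2
  have hedge := hl.1.2.2.2 _ hst
  have hx := M.emap_tail _ hedge
  have hy := M.emap_head _ hedge
  by_cases hxQ : (M.emap (s, t)).1 ∈ C.q i
  · by_cases hyQ : (M.emap (s, t)).2 ∈ C.q i
    · -- the walk exits `q i` inside `tin t`
      obtain ⟨l2, hl2⟩ := tin_path C M htv hy
      obtain ⟨p, r, hpr, hpQ, hrQ⟩ := exists_step (fun w => w ∉ C.q i)
        hl2.2.1 hl2.2.2 (not_not_intro hyQ) htQ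
      have hpQ : p ∈ C.q i := not_not.1 hpQ
      obtain ⟨hp1, hp2⟩ := mem_zip_tail hpr
      have hD2 : (p, r) ∈ C.D.edges := (tin_sub_D C M htv).2 (hl2.1.2.2.2 _ hpr)
      obtain ⟨hpb, hrc⟩ := C.q_exit hD2 hpQ hrQ
      exact hcitin t htv (hrc ▸ hl2.1.2.2.1 r hp2)
    · -- the modelled edge itself exits `q i`
      have hD2 : ((M.emap (s, t)).1, (M.emap (s, t)).2) ∈ C.D.edges := by
        simpa using M.emap_mem _ hedge
      obtain ⟨hxb, hyc⟩ := C.q_exit hD2 hxQ hyQ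
      exact hcitin t htv (hyc ▸ hy)
  · -- the walk exits `q i` inside `tout s`
    obtain ⟨l1, hl1⟩ := tout_path C M hsv hx
    obtain ⟨p, r, hpr, hpQ, hrQ⟩ := exists_step (fun w => w ∉ C.q i)
      hl1.2.1 hl1.2.2 (not_not_intro hsQ) hxQ
    have hpQ : p ∈ C.q i := not_not.1 hpQ
    obtain ⟨hp1, hp2⟩ := mem_zip_tail hpr
    have hD2 : (p, r) ∈ C.D.edges := (tout_sub_D C M hsv).2 (hl1.1.2.2.2 _ hpr)
    obtain ⟨hpb, hrc⟩ := C.q_exit hD2 hpQ hrQ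
    exact hcitout s hsv hsQ (hrc ▸ hl1.1.2.2.1 r hp2)

/-- No bag's in-arborescence can contain a tail of the `a`-ray. -/
theorem no_atail (hsc : StronglyConnected D')
    (hteeth : ∀ N, ∃ i, N ≤ i ∧ C.tooth i ∈ D'.verts) {v : V} (hv : v ∈ D'.verts)
    {N : ℕ} (ha : ∀ m, N ≤ m → C.a m ∈ (M.tin v).verts) : False := by
  obtain ⟨i, hiN, hiv⟩ := hteeth (max N (C.colOf v + 1))
  have hcolv : C.colOf v < i := by omega
  have hai : C.a i ∈ (M.tin v).verts := ha i (by omega)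
  have hvq : v ∉ C.q i := fun h => by
    have := C.colOf_mem_q h; omega
  have haitout : ∀ w, w ∈ D'.verts → C.a i ∈ (M.tout w).verts → False := by
    intro w hw haiw
    have hwv : w = v := owner_eq C M hw hv ((tout_sub_bag C M hw).1 haiw)
      ((tin_sub_bag C M hv).1 hai)
    subst hwv
    have hroot : C.a i = w := eq_root C M hw hai haiw
    have h2 : C.colOf w = i := by rw [← hroot]; exact C.colOf_a i
    omega
  have haitin : ∀ w, w ∈ D'.verts → w ∈ C.q i → C.a i ∈ (M.tin w).verts → False := by
    intro w hw hwq haiw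
    have hwv : w = v := owner_eq C M hw hv ((tin_sub_bag C M hw).1 haiw)
      ((tin_sub_bag C M hv).1 hai)
    exact hvq (hwv ▸ hwq)
  -- a D'-path from v to the tooth in column i
  obtain ⟨l, hl⟩ := hsc _ hv _ hiv
  obtain ⟨s, t, hst, hsQ, htQ⟩ := exists_step (fun w => w ∈ C.q i)
    hl.2.1 hl.2.2 hvq (C.tooth_mem i)
  obtain ⟨hm1, hm2⟩ := mem_zip_tail hst
  have hsv := hl.1.2.2.1 s hm1
  have htv := hl.1.2.2.1 t hm2
  have hedge := hl.1.2.2.2 _ hst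
  have hx := M.emap_tail _ hedge
  have hy := M.emap_head _ hedge
  by_cases hyQ : (M.emap (s, t)).2 ∈ C.q i
  · by_cases hxQ : (M.emap (s, t)).1 ∈ C.q i
    · -- the walk enters `q i` inside `tout s`
      obtain ⟨l1, hl1⟩ := tout_path C M hsv hx
      obtain ⟨p, r, hpr, hpQ, hrQ⟩ := exists_step (fun w => w ∈ C.q i)
        hl1.2.1 hl1.2.2 hsQ hxQ
      obtain ⟨hp1, hp2⟩ := mem_zip_tail hpr
      have hD2 : (p, r) ∈ C.D.edges := (tout_sub_D C M hsv).2 (hl1.1.2.2.2 _ hpr)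
      obtain ⟨hpa, hrb⟩ := C.q_entry hD2 hpQ hrQ
      exact haitout s hsv (hpa ▸ hl1.1.2.2.1 p hp1)
    · -- the modelled edge itself enters `q i`
      have hD2 : ((M.emap (s, t)).1, (M.emap (s, t)).2) ∈ C.D.edges := by
        simpa using M.emap_mem _ hedge
      obtain ⟨hxa, hyb⟩ := C.q_entry hD2 hxQ hyQ
      exact haitout s hsv (hxa ▸ hx)
  · -- the walk enters `q i` inside `tin t`
    obtain ⟨l2, hl2⟩ := tin_path C M htv hy
    obtain ⟨p, r, hpr, hpQ, hrQ⟩ := exists_step (fun w => w ∈ C.q i)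
      hl2.2.1 hl2.2.2 hyQ htQ
    obtain ⟨hp1, hp2⟩ := mem_zip_tail hpr
    have hD2 : (p, r) ∈ C.D.edges := (tin_sub_D C M htv).2 (hl2.1.2.2.2 _ hpr)
    obtain ⟨hpa, hrb⟩ := C.q_entry hD2 hpQ hrQ
    exact haitin t htv htQ (hpa ▸ hl2.1.2.2.1 p hp1)

/-- Each bag contains only boundedly many vertices `c m`. -/
theorem c_bag_bounded (hsc : StronglyConnected D')
    (hteeth : ∀ N, ∃ i, N ≤ i ∧ C.tooth i ∈ D'.verts) {v : V} (hv : v ∈ D'.verts) :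
    ∃ N, ∀ m, N ≤ m → C.c m ∉ (M.bag v).verts := by
  by_contra h
  push_neg at h
  have h' : ∀ N, ∃ m, N ≤ m ∧ C.c m ∈ (M.bag v).verts := h
  have hsplit : (∀ N, ∃ m, N ≤ m ∧ C.c m ∈ (M.tout v).verts) ∨
      (∀ N, ∃ m, N ≤ m ∧ C.c m ∈ (M.tin v).verts) := by
    by_contra hs
    push_neg at hs
    obtain ⟨⟨N1, hN1⟩, ⟨N2, hN2⟩⟩ := hs
    obtain ⟨m, hm1, hm2⟩ := h' (max N1 N2)
    rw [M.bag_eq v hv] at hm2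
    rcases hm2 with hm2 | hm2
    · exact hN2 m (by omega) hm2
    · exact hN1 m (by omega) hm2
  rcases hsplit with hout | hin
  · refine no_ctail C M hsc hteeth hv (N := C.colOf v) ?_
    intro m hm
    obtain ⟨k, hk1, hk2⟩ := hout (m + 1)
    obtain ⟨l, hl⟩ := tout_path C M hv hk2
    have := C.cross_right (tout_sub_D C M hv) hl (k := m) hm (by rw [C.colOf_c]; omega)
    exact this.1
  · refine no_atail C M hsc hteeth hv (N := C.colOf v + 1) ?_
    intro m hm
    obtain ⟨k, hk1, hk2⟩ := hin (m + 1)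
    obtain ⟨l, hl⟩ := tin_path C M hv hk2
    have := C.cross_left (tin_sub_D C M hv) hl (k := m - 1)
      (by rw [C.colOf_c]; omega) (by omega)
    have h1 := this.1
    have : m - 1 + 1 = m := by omega
    rwa [this] at h1

/-- Each bag contains only boundedly many vertices `a m`. -/
theorem a_bag_bounded (hsc : StronglyConnected D')
    (hteeth : ∀ N, ∃ i, N ≤ i ∧ C.tooth i ∈ D'.verts) {v : V} (hv : v ∈ D'.verts) :
    ∃ N, ∀ m, N ≤ m → C.a m ∉ (M.bag v).verts := by
  by_contra h
  push_neg at h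
  have h' : ∀ N, ∃ m, N ≤ m ∧ C.a m ∈ (M.bag v).verts := h
  have hsplit : (∀ N, ∃ m, N ≤ m ∧ C.a m ∈ (M.tout v).verts) ∨
      (∀ N, ∃ m, N ≤ m ∧ C.a m ∈ (M.tin v).verts) := by
    by_contra hs
    push_neg at hs
    obtain ⟨⟨N1, hN1⟩, ⟨N2, hN2⟩⟩ := hs
    obtain ⟨m, hm1, hm2⟩ := h' (max N1 N2)
    rw [M.bag_eq v hv] at hm2
    rcases hm2 with hm2 | hm2
    · exact hN2 m (by omega) hm2
    · exact hN1 m (by omega) hm2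
  rcases hsplit with hout | hin
  · refine no_ctail C M hsc hteeth hv (N := C.colOf v) ?_
    intro m hm
    obtain ⟨k, hk1, hk2⟩ := hout (m + 1)
    obtain ⟨l, hl⟩ := tout_path C M hv hk2
    have := C.cross_right (tout_sub_D C M hv) hl (k := m) hm (by rw [C.colOf_a]; omega)
    exact this.1
  · refine no_atail C M hsc hteeth hv (N := C.colOf v + 1) ?_
    intro m hm
    obtain ⟨k, hk1, hk2⟩ := hin (m + 1)
    obtain ⟨l, hl⟩ := tin_path C M hv hk2
    have := C.cross_left (tin_sub_D C M hv) hl (k := m - 1)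
      (by rw [C.colOf_a]; omega) (by omega)
    have h1 := this.1
    have : m - 1 + 1 = m := by omega
    rwa [this] at h1

/-- Key disjointness lemma: no single bag can serve as an interior vertex of
both the out-ray (via `c`-vertices) and the in-ray (via `a`-vertices). -/
theorem bag_not_both {x : V} (hx : x ∈ D'.verts) {κ σ μ lam : ℕ}
    (hκ : C.c κ ∈ (M.tin x).verts) (hσ : C.c σ ∈ (M.tout x).verts) (hκσ : κ ≤ σ)
    (hμ : C.a μ ∈ (M.tin x).verts) (hlam : C.a (lam + 1) ∈ (M.tout x).verts)
    (hlamμ : lam + 1 ≤ μ) : False := by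
  set ν := C.colOf x with hν
  have hsubO := tout_sub_D C M hx
  have hsubI := tin_sub_D C M hx
  by_cases hνlam : ν ≤ lam
  · -- the in-path from `a μ` to `x` must contain `a (lam+1)`, which is in `tout x`
    obtain ⟨l, hl⟩ := tin_path C M hx hμ
    have := C.cross_left hsubI hl (k := lam) (by rw [C.colOf_a]; omega) (by omega)
    have hroot := eq_root C M hx this.1 hlam
    have : C.colOf x = lam + 1 := by rw [← hroot, C.colOf_a]
    omega
  · push_neg at hνlam
    have hlamν : lam + 1 ≤ ν := hνlam
    -- `a m ∈ tout x` for all `lam + 1 ≤ m ≤ ν`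
    have key1 : ∀ m, lam + 1 ≤ m → m ≤ ν → C.a m ∈ (M.tout x).verts := by
      intro m h1 h2
      rcases eq_or_lt_of_le h1 with rfl | h1'
      · exact hlam
      · obtain ⟨l, hl⟩ := tout_path C M hx hlam
        have := C.cross_left hsubO hl (k := m - 1) (by omega) (by rw [C.colOf_a]; omega)
        have h3 := this.1
        have : m - 1 + 1 = m := by omega
        rwa [this] at h3
    -- conclude x = a ν
    have hxa : x = C.a ν := by
      by_cases hμν : μ ≤ ν
      · have h1 := key1 μ hlamμ hμν
        have hroot := eq_root C M hx hμ h1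
        have h2 : C.colOf x = μ := by rw [← hroot, C.colOf_a]
        rw [← hroot]
        congr 1
        omega
      · push_neg at hμν
        obtain ⟨l, hl⟩ := tin_path C M hx hμ
        have := C.cross_left hsubI hl (k := ν) (by rw [C.colOf_a]; omega) (by omega)
        exact (eq_root C M hx this.2 (key1 ν (by omega) le_rfl)).symm
    -- now use the c-facts
    have hacν : ∀ j, C.c j = x → False := by
      intro j hj
      exact C.a_ne_c (hxa ▸ hj).symm
    by_cases hσν : σ < ν
    · -- c σ ∈ tin x via the path from c κ to x
      obtain ⟨l, hl⟩ := tin_path C M hx hκ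
      have := C.cross_right hsubI hl (k := σ) (by rw [C.colOf_c]; omega) (by omega)
      exact hacν σ (eq_root C M hx this.1 hσ)
    · push_neg at hσν
      -- c ν ∈ tout x
      have hcν : C.c ν ∈ (M.tout x).verts := by
        rcases eq_or_lt_of_le hσν with rfl | hσν'
        · exact hσ
        · obtain ⟨l, hl⟩ := tout_path C M hx hσ
          have := C.cross_right hsubO hl (k := ν) (by omega) (by rw [C.colOf_c]; omega)
          exact this.1
      by_cases hκν : κ < ν
      · -- c ν ∈ tin x via the path from c κ to x
        obtain ⟨l, hl⟩ := tin_path C M hx hκ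
        have := C.cross_right hsubI hl (k := ν - 1) (by rw [C.colOf_c]; omega) (by omega)
        have h2 := this.2
        have h3 : ν - 1 + 1 = ν := by omega
        rw [h3] at h2
        exact hacν ν (eq_root C M hx h2 hcν)
      · push_neg at hκν
        -- c κ ∈ tout x
        have hcκ : C.c κ ∈ (M.tout x).verts := by
          rcases eq_or_lt_of_le hκσ with rfl | hκσ'
          · exact hσ
          · obtain ⟨l, hl⟩ := tout_path C M hx hσ
            have := C.cross_right hsubO hl (k := κ) (by omega) (by rw [C.colOf_c]; omega)
            exact this.1
        exact hacν κ (eq_root C M hx hκ hcκ)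

end ModelLemmas

section Extraction

/-- Ray-extraction: from a sequence with equal-or-transition steps in which
every value occurs only finitely often, extract a strictly increasing sequence
of genuine transition indices whose values form an injective sequence. -/
theorem extract_ray {α : Type u} (u : ℕ → α) (P : ℕ → Prop)
    (hfin : ∀ x, {n | u n = x}.Finite)
    (htrans : ∀ n, u n = u (n + 1) ∨ P n) :
    ∃ n : ℕ → ℕ, (∀ i, n i < n (i + 1)) ∧ (∀ i, P (n i)) ∧
      (∀ i, u (n i + 1) = u (n (i + 1))) ∧
      Function.Injective (fun i => u (n i)) := by
  classical
  set m : α → ℕ := fun x => sSup {k | u k = x} with hm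
  have hmem : ∀ i : ℕ, u (m (u i)) = u i := by
    intro i
    have hne : Set.Nonempty {k | u k = u i} := ⟨i, rfl⟩
    exact Nat.sSup_mem hne (hfin (u i)).bddAbove
  have hge : ∀ i : ℕ, i ≤ m (u i) := by
    intro i
    exact le_csSup (hfin (u i)).bddAbove rfl
  have hle : ∀ i j : ℕ, u j = u i → j ≤ m (u i) := by
    intro i j h
    exact le_csSup (hfin (u i)).bddAbove h
  -- the recursion
  set r : ℕ → ℕ := fun i => Nat.rec 0 (fun _ prev => m (u prev) + 1) i with hr
  have hrsucc : ∀ i, r (i + 1) = m (u (r i)) + 1 := fun i => rfl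
  set n : ℕ → ℕ := fun i => m (u (r i)) with hn
  have hA : ∀ i, u (n i) = u (r i) := fun i => hmem (r i)
  have hC : ∀ i, u (n i + 1) ≠ u (n i) := by
    intro i h
    have h2 : u (n i + 1) = u (r i) := h.trans (hA i)
    have h3 := hle (r i) (n i + 1) h2
    have h4 : m (u (r i)) = n i := rfl
    omega
  have hnext : ∀ i, u (n i + 1) = u (n (i + 1)) := by
    intro i
    have h2 : u (r (i + 1)) = u (n (i + 1)) := (hA (i + 1)).symm
    rw [hrsucc i] at h2
    exact h2
  have hmono : ∀ i, n i < n (i + 1) := by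
    intro i
    have h1 : r (i + 1) ≤ n (i + 1) := hge (r (i + 1))
    have h2 : r (i + 1) = n i + 1 := hrsucc i
    omega
  have hmono' : StrictMono n := strictMono_nat_of_lt_succ hmono
  have hP : ∀ i, P (n i) := by
    intro i
    rcases htrans (n i) with h | h
    · exact absurd h.symm (hC i)
    · exact h
  have hkey : ∀ i j, i < j → u (n i) ≠ u (n j) := by
    intro i j hij h
    have h1 : n j ≤ m (u (n i)) := hle (n i) (n j) h.symm
    have h2 : m (u (n i)) = m (u (r i)) := by rw [hA i]
    have h3 : m (u (r i)) = n i := rfl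
    have := hmono' hij
    omega
  refine ⟨n, hmono, hP, hnext, ?_⟩
  intro i j h
  rcases lt_trichotomy i j with hij | hij | hij
  · exact absurd h (hkey i j hij)
  · exact hij
  · exact absurd h.symm (hkey j i hij)

end Extraction

section Part1

variable {V : Type u} (C : ChainData V) {D' : DGraph V} (M : TreeLikeModel C.D D')

include M in
/-- **Part 1 of Statement 19**: a strongly connected butterfly minor of a
chain of triangles containing infinitely many teeth contains vertex-disjoint
out- and in-rays. -/
theorem exists_disjoint_rays (hsc : StronglyConnected D')
    (hteeth : ∀ N, ∃ i, N ≤ i ∧ C.tooth i ∈ D'.verts) :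
    ∃ f g : ℕ → V, Function.Injective f ∧ Function.Injective g ∧
      outRay f ⊆ D' ∧ inRay g ⊆ D' ∧ Set.range f ∩ Set.range g = ∅ := by
  classical
  obtain ⟨i0, -, hi0⟩ := hteeth 0
  have htooth_high : ∀ k, ∃ j, k < j ∧ C.tooth j ∈ D'.verts := by
    intro k
    obtain ⟨j, hj1, hj2⟩ := hteeth (k + 1)
    exact ⟨j, by omega, hj2⟩
  -- transitions for the c-ray owners
  have htrans_c : ∀ k, i0 ≤ k →
      ∃ s t, (s ∈ D'.verts ∧ C.c k ∈ (M.bag s).verts) ∧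
        (t ∈ D'.verts ∧ C.c (k + 1) ∈ (M.bag t).verts) ∧
        (s = t ∨ ((s, t) ∈ D'.edges ∧ C.c k ∈ (M.tout s).verts ∧
          C.c (k + 1) ∈ (M.tin t).verts)) := by
    intro k hk
    obtain ⟨j, hj1, hj2⟩ := htooth_high k
    have hr : Reaches D' (C.tooth i0) (C.tooth j) := hsc _ hi0 _ hj2
    rcases reach_cross_right C M (k := k) hr (by rw [C.colOf_tooth]; omega)
        (by rw [C.colOf_tooth]; omega) with
      ⟨w, hw, h1, h2⟩ | ⟨s, t, hs, ht, he, h1, h2⟩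
    · exact ⟨w, w, ⟨hw, h1⟩, ⟨hw, h2⟩, Or.inl rfl⟩
    · exact ⟨s, t, ⟨hs, (tout_sub_bag C M hs).1 h1⟩, ⟨ht, (tin_sub_bag C M ht).1 h2⟩,
        Or.inr ⟨he, h1, h2⟩⟩
  -- transitions for the a-ray owners
  have htrans_a : ∀ k, i0 ≤ k →
      ∃ s t, (s ∈ D'.verts ∧ C.a (k + 1) ∈ (M.bag s).verts) ∧
        (t ∈ D'.verts ∧ C.a k ∈ (M.bag t).verts) ∧
        (s = t ∨ ((s, t) ∈ D'.edges ∧ C.a (k + 1) ∈ (M.tout s).verts ∧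
          C.a k ∈ (M.tin t).verts)) := by
    intro k hk
    obtain ⟨j, hj1, hj2⟩ := htooth_high k
    have hr : Reaches D' (C.tooth j) (C.tooth i0) := hsc _ hj2 _ hi0
    rcases reach_cross_left C M (k := k) hr (by rw [C.colOf_tooth]; omega)
        (by rw [C.colOf_tooth]; omega) with
      ⟨w, hw, h1, h2⟩ | ⟨s, t, hs, ht, he, h1, h2⟩
    · exact ⟨w, w, ⟨hw, h1⟩, ⟨hw, h2⟩, Or.inl rfl⟩
    · exact ⟨s, t, ⟨hs, (tout_sub_bag C M hs).1 h1⟩, ⟨ht, (tin_sub_bag C M ht).1 h2⟩,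
        Or.inr ⟨he, h1, h2⟩⟩
  -- the owner functions
  have hocc_c : ∀ n : ℕ, ∃ s, s ∈ D'.verts ∧ C.c (i0 + n) ∈ (M.bag s).verts := by
    intro n
    obtain ⟨s, t, hs, _, _⟩ := htrans_c (i0 + n) (by omega)
    exact ⟨s, hs⟩
  have hocc_a : ∀ n : ℕ, ∃ s, s ∈ D'.verts ∧ C.a (i0 + n) ∈ (M.bag s).verts := by
    intro n
    obtain ⟨s, t, _, ht, _⟩ := htrans_a (i0 + n) (by omega)
    exact ⟨t, ht⟩
  set uc : ℕ → V := fun n => (hocc_c n).choose with huc_def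
  set ua : ℕ → V := fun n => (hocc_a n).choose with hua_def
  have huc_vert : ∀ n, uc n ∈ D'.verts := fun n => (hocc_c n).choose_spec.1
  have huc_own : ∀ n, C.c (i0 + n) ∈ (M.bag (uc n)).verts := fun n => (hocc_c n).choose_spec.2
  have hua_vert : ∀ n, ua n ∈ D'.verts := fun n => (hocc_a n).choose_spec.1
  have hua_own : ∀ n, C.a (i0 + n) ∈ (M.bag (ua n)).verts := fun n => (hocc_a n).choose_spec.2
  have huc_trans : ∀ n, uc n = uc (n + 1) ∨
      ((uc n, uc (n + 1)) ∈ D'.edges ∧ C.c (i0 + n) ∈ (M.tout (uc n)).verts ∧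
        C.c (i0 + n + 1) ∈ (M.tin (uc (n + 1))).verts) := by
    intro n
    obtain ⟨s, t, ⟨hs, hs2⟩, ⟨ht, ht2⟩, hor⟩ := htrans_c (i0 + n) (by omega)
    have h1 : C.c (i0 + (n + 1)) ∈ (M.bag (uc (n + 1))).verts := huc_own (n + 1)
    rw [show i0 + (n + 1) = i0 + n + 1 by omega] at h1
    have hsu : s = uc n := owner_eq C M hs (huc_vert n) hs2 (huc_own n)
    have htu : t = uc (n + 1) := owner_eq C M ht (huc_vert (n + 1)) ht2 h1
    rw [hsu, htu] at hor
    exact hor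
  have hua_trans : ∀ n, ua n = ua (n + 1) ∨
      ((ua (n + 1), ua n) ∈ D'.edges ∧ C.a (i0 + n + 1) ∈ (M.tout (ua (n + 1))).verts ∧
        C.a (i0 + n) ∈ (M.tin (ua n)).verts) := by
    intro n
    obtain ⟨s, t, ⟨hs, hs2⟩, ⟨ht, ht2⟩, hor⟩ := htrans_a (i0 + n) (by omega)
    have h1 : C.a (i0 + (n + 1)) ∈ (M.bag (ua (n + 1))).verts := hua_own (n + 1)
    rw [show i0 + (n + 1) = i0 + n + 1 by omega] at h1
    have hsu : s = ua (n + 1) := owner_eq C M hs (hua_vert (n + 1)) hs2 h1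
    have htu : t = ua n := owner_eq C M ht (hua_vert n) ht2 (hua_own n)
    rw [hsu, htu] at hor
    rcases hor with h | h
    · exact Or.inl h.symm
    · exact Or.inr h
  -- finite multiplicity
  have hfin_c : ∀ x, {n | uc n = x}.Finite := by
    intro x
    by_contra hinf
    have hinf : {n | uc n = x}.Infinite := hinf
    obtain ⟨n0, hn0⟩ := hinf.nonempty
    have hx : x ∈ D'.verts := hn0 ▸ huc_vert n0
    obtain ⟨N, hN⟩ := c_bag_bounded C M hsc hteeth hx
    obtain ⟨k, hk1, hk2⟩ := hinf.exists_gt N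
    exact hN (i0 + k) (by omega) (hk1 ▸ huc_own k)
  have hfin_a : ∀ x, {n | ua n = x}.Finite := by
    intro x
    by_contra hinf
    have hinf : {n | ua n = x}.Infinite := hinf
    obtain ⟨n0, hn0⟩ := hinf.nonempty
    have hx : x ∈ D'.verts := hn0 ▸ hua_vert n0
    obtain ⟨N, hN⟩ := a_bag_bounded C M hsc hteeth hx
    obtain ⟨k, hk1, hk2⟩ := hinf.exists_gt N
    exact hN (i0 + k) (by omega) (hk1 ▸ hua_own k)
  -- extract the rays
  obtain ⟨nc, hncmono, hncP, hncnext, hncinj⟩ := extract_ray uc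
    (fun n => (uc n, uc (n + 1)) ∈ D'.edges ∧ C.c (i0 + n) ∈ (M.tout (uc n)).verts ∧
      C.c (i0 + n + 1) ∈ (M.tin (uc (n + 1))).verts) hfin_c huc_trans
  obtain ⟨na, hnamono, hnaP, hnanext, hnainj⟩ := extract_ray ua
    (fun n => (ua (n + 1), ua n) ∈ D'.edges ∧ C.a (i0 + n + 1) ∈ (M.tout (ua (n + 1))).verts ∧
      C.a (i0 + n) ∈ (M.tin (ua n)).verts) hfin_a hua_trans
  -- the rays, shifted by one
  refine ⟨fun i => uc (nc (i + 1)), fun j => ua (na (j + 1)), ?_, ?_, ?_, ?_, ?_⟩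
  · intro i j h
    have := hncinj (a₁ := i + 1) (a₂ := j + 1) h
    omega
  · intro i j h
    have := hnainj (a₁ := i + 1) (a₂ := j + 1) h
    omega
  · constructor
    · rintro v ⟨i, rfl⟩
      exact huc_vert _
    · rintro e ⟨i, rfl⟩
      have h1 := (hncP (i + 1)).1
      rwa [hncnext (i + 1)] at h1
  · constructor
    · rintro v ⟨j, rfl⟩
      exact hua_vert _
    · rintro e ⟨j, rfl⟩
      have h1 := (hnaP (j + 1)).1
      rwa [hnanext (j + 1)] at h1
  · ext x
    simp only [Set.mem_inter_iff, Set.mem_range, Set.mem_empty_iff_false, iff_false,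
      not_and]
    rintro ⟨i, rfl⟩ ⟨j, hj⟩
    -- x = uc (nc (i+1)) = ua (na (j+1)) is interior on both rays
    set x := uc (nc (i + 1)) with hxdef
    have hxvert : x ∈ D'.verts := huc_vert _
    -- c-facts
    have hκ : C.c (i0 + nc i + 1) ∈ (M.tin x).verts := by
      have h := (hncP i).2.2
      rwa [hncnext i] at h
    have hσ : C.c (i0 + nc (i + 1)) ∈ (M.tout x).verts := (hncP (i + 1)).2.1
    -- a-facts
    have hlam : C.a (i0 + na j + 1) ∈ (M.tout x).verts := by
      have h := (hnaP j).2.1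
      rw [hnanext j] at h
      rwa [hj] at h
    have hμ : C.a (i0 + na (j + 1)) ∈ (M.tin x).verts := by
      have h := (hnaP (j + 1)).2.2
      rwa [hj] at h
    have hmono1 : nc i < nc (i + 1) := hncmono i
    have hmono2 : na j < na (j + 1) := hnamono j
    exact bag_not_both C M hxvert hκ hσ (by omega) hμ hlam (by omega)

end Part1

section RayHelpers

variable {V : Type u}

theorem pair_eq {α : Type u} {A B C D : α} (h : (A, B) = (C, D)) : A = C ∧ B = D :=
  ⟨(Prod.ext_iff.1 h).1, (Prod.ext_iff.1 h).2⟩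

/-- An injective sequence eventually avoids any finite set. -/
theorem eventually_avoids {F : ℕ → V} (hF : Function.Injective F) {s : Set V}
    (hs : s.Finite) : ∃ N, ∀ n, N ≤ n → F n ∉ s := by
  have hfin : {n | F n ∈ s}.Finite := Set.Finite.preimage (hF.injOn) hs
  obtain ⟨N, hN⟩ := hfin.bddAbove
  refine ⟨N + 1, fun n hn hmem => ?_⟩
  have := hN hmem
  omega

/-- An injective sequence cannot have a tail inside a finite set. -/
theorem not_tail_in_finite {F : ℕ → V} (hF : Function.Injective F) {s : Set V}
    (hs : s.Finite) {N : ℕ} (h : ∀ n, N ≤ n → F n ∈ s) : False := by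
  obtain ⟨N', hN'⟩ := eventually_avoids hF hs
  exact hN' (max N N') (by omega) (h _ (by omega))

/-- A sequence of naturals cannot keep strictly decreasing forever. -/
theorem no_descending (φ : ℕ → ℕ) (T : ℕ)
    (h : ∀ t, T ≤ t → 1 ≤ φ t ∧ φ (t + 1) = φ t - 1) : False := by
  have key : ∀ k, φ (T + k) + k = φ T := by
    intro k
    induction k with
    | zero => simp
    | succ k ih =>
        have h1 := h (T + k) (by omega)
        have h2 : T + (k + 1) = T + k + 1 := by omega
        rw [h2, h1.2]
        omega
  have h1 := (h (T + φ T) (by omega)).1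
  have h2 := key (φ T)
  omega

theorem exists_min_gt {P : ℕ → Prop} (t : ℕ) (h : ∃ s, t < s ∧ P s) :
    ∃ s, t < s ∧ P s ∧ ∀ r, t < r → r < s → ¬ P r := by
  classical
  obtain ⟨ht, hP⟩ := Nat.find_spec h
  refine ⟨Nat.find h, ht, hP, fun r h1 h2 hPr => ?_⟩
  exact Nat.find_min h h2 ⟨h1, hPr⟩

/-- A dominated-out-ray contains no in-ray. -/
theorem domOutRay_no_inRay {f g : ℕ → V} (hf : Function.Injective f)
    (hg : Function.Injective g) (h : inRay g ⊆ domOutRay f) : False := by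
  classical
  have hvert : ∀ n, g n ∈ Set.range f := fun n => h.1 ⟨n, rfl⟩
  set φ : ℕ → ℕ := fun n => (hvert n).choose with hφ
  have hφs : ∀ n, f (φ n) = g n := fun n => (hvert n).choose_spec
  have hφinj : Function.Injective φ := by
    intro i j hij
    exact hg (by rw [← hφs i, ← hφs j, hij])
  have hstep : ∀ n, φ n = 0 ∨ (1 ≤ φ n ∧ φ (n + 1) = φ n - 1) := by
    intro n
    have he : (g (n + 1), g n) ∈ (domOutRay f).edges := h.2 ⟨n, rfl⟩
    rcases he with ⟨m, hm⟩ | ⟨m, hm⟩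
    · obtain ⟨h1, h2⟩ := Prod.ext_iff.1 hm
      right
      have e1 : φ (n + 1) = m := hf (by rw [hφs]; exact h1)
      have e2 : φ n = m + 1 := hf (by rw [hφs]; exact h2)
      omega
    · obtain ⟨h1, h2⟩ := Prod.ext_iff.1 hm
      left
      exact hf (by rw [hφs]; exact h2)
  obtain ⟨N, hN⟩ := eventually_avoids hφinj (Set.finite_singleton 0)
  refine no_descending φ N fun t ht => ?_
  rcases hstep t with h0 | h1
  · exact absurd (Set.mem_singleton_iff.2 h0) (hN t ht)
  · exact h1

/-- A dominated-in-ray contains no out-ray. -/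
theorem domInRay_no_outRay {f g : ℕ → V} (hf : Function.Injective f)
    (hg : Function.Injective g) (h : outRay g ⊆ domInRay f) : False := by
  classical
  have hvert : ∀ n, g n ∈ Set.range f := fun n => h.1 ⟨n, rfl⟩
  set φ : ℕ → ℕ := fun n => (hvert n).choose with hφ
  have hφs : ∀ n, f (φ n) = g n := fun n => (hvert n).choose_spec
  have hφinj : Function.Injective φ := by
    intro i j hij
    exact hg (by rw [← hφs i, ← hφs j, hij])
  have hstep : ∀ n, φ n = 0 ∨ (1 ≤ φ n ∧ φ (n + 1) = φ n - 1) := by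
    intro n
    have he : (g n, g (n + 1)) ∈ (domInRay f).edges := h.2 ⟨n, rfl⟩
    rcases he with ⟨m, hm⟩ | ⟨m, hm⟩
    · obtain ⟨h1, h2⟩ := Prod.ext_iff.1 hm
      right
      have e1 : φ n = m + 1 := hf (by rw [hφs]; exact h1)
      have e2 : φ (n + 1) = m := hf (by rw [hφs]; exact h2)
      omega
    · obtain ⟨h1, h2⟩ := Prod.ext_iff.1 hm
      left
      exact hf (by rw [hφs]; exact h1)
  obtain ⟨N, hN⟩ := eventually_avoids hφinj (Set.finite_singleton 0)
  refine no_descending φ N fun t ht => ?_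
  rcases hstep t with h0 | h1
  · exact absurd (Set.mem_singleton_iff.2 h0) (hN t ht)
  · exact h1

/-- A graph containing a disjoint out-ray/in-ray pair is not a dominated
directed ray. -/
theorem not_dominated {D' : DGraph V} {F G : ℕ → V} (hFinj : Function.Injective F)
    (hGinj : Function.Injective G) (hF : outRay F ⊆ D') (hG : inRay G ⊆ D') :
    ¬ IsDominatedDirectedRay D' := by
  rintro ⟨f, hfinj, rfl | rfl⟩
  · exact domOutRay_no_inRay hfinj hGinj hG
  · exact domInRay_no_outRay hfinj hFinj hF


theorem doubleOfList_edge_mem {l : List V} {e : V × V}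
    (h : e ∈ (doubleOfList l).edges) : e.1 ∈ l ∧ e.2 ∈ l := by
  rcases h with h | h
  · have := mem_zip_tail (l := l) (x := e.1) (y := e.2) (by exact h)
    exact this
  · have := mem_zip_tail (l := l) (x := e.2) (y := e.1) (by exact h)
    exact ⟨this.2, this.1⟩

/-- `𝒟` of a subdivided star contains no out-ray. -/
theorem dstar_no_outRay {D' : DGraph V} {teeth : Set V} {F : ℕ → V}
    (hFinj : Function.Injective F) (hF : outRay F ⊆ D')
    (hstar : IsDSubdividedStar D' teeth) : False := by
  obtain ⟨cv, q, hq, hsep, hGeq, -⟩ := hstar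
  have hbr : ∀ n, ∃ m, F n ∈ q m ∧ F (n + 1) ∈ q m := by
    intro n
    have he : (F n, F (n + 1)) ∈ D'.edges := hF.2 ⟨n, rfl⟩
    rw [hGeq] at he
    simp only [iUnion_edges, Set.mem_iUnion] at he
    obtain ⟨m, hm⟩ := he
    exact ⟨m, doubleOfList_edge_mem hm⟩
  obtain ⟨N, hNc⟩ := eventually_avoids hFinj (Set.finite_singleton cv)
  obtain ⟨m0, hm0, -⟩ := hbr N
  have hconst : ∀ k, F (N + k) ∈ q m0 := by
    intro k
    induction k with
    | zero => simpa using hm0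
    | succ k ih =>
        obtain ⟨m, h1, h2⟩ := hbr (N + k)
        have hmm : m = m0 := by
          by_contra hne
          have hcv : F (N + k) = cv := hsep m m0 hne _ h1 ih
          exact hNc (N + k) (by omega) (Set.mem_singleton_iff.2 hcv)
        rw [show N + (k + 1) = N + k + 1 by omega]
        exact hmm ▸ h2
  exact not_tail_in_finite hFinj (List.finite_toSet (q m0)) (N := N) fun t ht => by
    have := hconst (t - N)
    rwa [show N + (t - N) = t by omega] at this


/-- A ray-centre star does not contain both an out-ray and an in-ray. -/
theorem raycentre_no_rays {D' : DGraph V} {teeth : Set V} {F G : ℕ → V}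
    (hFinj : Function.Injective F) (hGinj : Function.Injective G)
    (hF : outRay F ⊆ D') (hG : inRay G ⊆ D')
    (h : IsRayCentreStar D' teeth) : False := by
  classical
  obtain ⟨f, R, gf, q, hfinj, hR, hq, hqf, hqd, hGeq, -⟩ := h
  have hgfq : ∀ n, gf n ∈ q n := fun n =>
    List.mem_of_mem_head? (by rw [(hq n).2]; simp)
  have hRf : ∀ e ∈ R.edges, e.1 ∈ Set.range f ∧ e.2 ∈ Set.range f := by
    rcases hR with rfl | rfl <;>
      · rintro e (⟨m, rfl⟩ | ⟨m, rfl⟩)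
        · exact ⟨⟨_, rfl⟩, ⟨_, rfl⟩⟩
        · exact ⟨⟨_, rfl⟩, ⟨_, rfl⟩⟩
  have hRv : R.verts = Set.range f := by rcases hR with rfl | rfl <;> rfl
  have hedge : ∀ e, e ∈ D'.edges → e ∈ R.edges ∨
      (∃ n, e.1 ∈ q n ∧ e.2 ∈ q n) ∨ (∃ n, e = (f n, gf n) ∨ e = (gf n, f n)) := by
    intro e he
    rw [hGeq] at he
    rcases he with he | he
    · exact Or.inl he
    · simp only [iUnion_edges, Set.mem_iUnion] at he
      obtain ⟨n, hn⟩ := he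
      rcases hn with hn | hn
      · exact Or.inr (Or.inl ⟨n, doubleOfList_edge_mem hn⟩)
      · rcases hn with hn | hn
        · exact Or.inr (Or.inr ⟨n, Or.inl hn⟩)
        · exact Or.inr (Or.inr ⟨n, Or.inr hn⟩)
  have hvert : ∀ v, v ∈ D'.verts → v ∈ Set.range f ∨ ∃ n, v ∈ q n := by
    intro v hv
    rw [hGeq] at hv
    rcases hv with hv | hv
    · rw [hRv] at hv
      exact Or.inl hv
    · simp only [iUnion_verts, Set.mem_iUnion] at hv
      obtain ⟨n, hn⟩ := hv
      rcases hn with hn | hn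
      · rcases hn with hn | hn
        · exact Or.inr ⟨n, hn⟩
        · exact Or.inr ⟨n, hn⟩
      · rcases hn with rfl | hn
        · exact Or.inl ⟨n, rfl⟩
        · rw [Set.mem_singleton_iff] at hn
          subst hn
          exact Or.inr ⟨n, hgfq n⟩
  have hbranch2 : ∀ (ρ : ℕ → V) (t' : ℕ),
      ((ρ t', ρ (t' + 1)) ∈ D'.edges ∨ (ρ (t' + 1), ρ t') ∈ D'.edges) →
      ρ t' ∉ Set.range f → ρ (t' + 1) ∉ Set.range f →
      ∃ n, ρ t' ∈ q n ∧ ρ (t' + 1) ∈ q n := by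
    intro ρ t' hρe h1 h2
    rcases hρe with he | he
    · rcases hedge _ he with hr | ⟨n, hn1, hn2⟩ | ⟨n, he2 | he2⟩
      · exact absurd (hRf _ hr).1 h1
      · exact ⟨n, hn1, hn2⟩
      · exact absurd ⟨n, ((Prod.ext_iff.1 he2).1).symm⟩ h1
      · exact absurd ⟨n, ((Prod.ext_iff.1 he2).2).symm⟩ h2
    · rcases hedge _ he with hr | ⟨n, hn1, hn2⟩ | ⟨n, he2 | he2⟩
      · exact absurd (hRf _ hr).1 h2
      · exact ⟨n, hn2, hn1⟩
      · exact absurd ⟨n, ((Prod.ext_iff.1 he2).1).symm⟩ h2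
      · exact absurd ⟨n, ((Prod.ext_iff.1 he2).2).symm⟩ h1
  have hxchg : ∀ (ρ : ℕ → V) (t' : ℕ),
      ((ρ t', ρ (t' + 1)) ∈ D'.edges ∨ (ρ (t' + 1), ρ t') ∈ D'.edges) →
      ρ t' ∈ Set.range f → ρ (t' + 1) ∉ Set.range f →
      ∃ n, ρ t' = f n ∧ ρ (t' + 1) = gf n := by
    intro ρ t' hρe h1 h2
    rcases hρe with he | he
    · rcases hedge _ he with hr | ⟨n, hn1, hn2⟩ | ⟨n, he2 | he2⟩
      · exact absurd (hRf _ hr).2 h2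
      · exact absurd h1 (hqf _ _ hn1)
      · exact ⟨n, (Prod.ext_iff.1 he2).1, (Prod.ext_iff.1 he2).2⟩
      · exact absurd ⟨n, ((Prod.ext_iff.1 he2).2).symm⟩ h2
    · rcases hedge _ he with hr | ⟨n, hn1, hn2⟩ | ⟨n, he2 | he2⟩
      · exact absurd (hRf _ hr).1 h2
      · exact absurd h1 (hqf _ _ hn2)
      · exact absurd ⟨n, ((Prod.ext_iff.1 he2).1).symm⟩ h2
      · exact ⟨n, (Prod.ext_iff.1 he2).2, (Prod.ext_iff.1 he2).1⟩
  have hxchg' : ∀ (ρ : ℕ → V) (t' : ℕ),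
      ((ρ t', ρ (t' + 1)) ∈ D'.edges ∨ (ρ (t' + 1), ρ t') ∈ D'.edges) →
      ρ t' ∉ Set.range f → ρ (t' + 1) ∈ Set.range f →
      ∃ n, ρ (t' + 1) = f n ∧ ρ t' = gf n := by
    intro ρ t' hρe h1 h2
    rcases hρe with he | he
    · rcases hedge _ he with hr | ⟨n, hn1, hn2⟩ | ⟨n, he2 | he2⟩
      · exact absurd (hRf _ hr).1 h1
      · exact absurd h2 (hqf _ _ hn2)
      · exact absurd ⟨n, ((Prod.ext_iff.1 he2).1).symm⟩ h1
      · exact ⟨n, (Prod.ext_iff.1 he2).2, (Prod.ext_iff.1 he2).1⟩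
    · rcases hedge _ he with hr | ⟨n, hn1, hn2⟩ | ⟨n, he2 | he2⟩
      · exact absurd (hRf _ hr).2 h1
      · exact absurd h2 (hqf _ _ hn1)
      · exact ⟨n, (Prod.ext_iff.1 he2).1, (Prod.ext_iff.1 he2).2⟩
      · exact absurd ⟨n, ((Prod.ext_iff.1 he2).2).symm⟩ h1
  have confine : ∀ ρ : ℕ → V, Function.Injective ρ → (∀ t, ρ t ∈ D'.verts) →
      (∀ t, (ρ t, ρ (t + 1)) ∈ D'.edges ∨ (ρ (t + 1), ρ t) ∈ D'.edges) →
      ∃ t0, ∀ t, t0 ≤ t → ρ t ∈ Set.range f := by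
    intro ρ hρinj hρv hρe
    have hinfs : ∀ T, ∃ t, T ≤ t ∧ ρ t ∈ Set.range f := by
      by_contra hcon
      push_neg at hcon
      obtain ⟨T, hT⟩ := hcon
      have hTq : ∃ n, ρ T ∈ q n := by
        rcases hvert _ (hρv T) with h | h
        · exact absurd h (hT T le_rfl)
        · exact h
      obtain ⟨n0, hn0⟩ := hTq
      have hconst : ∀ k, ρ (T + k) ∈ q n0 := by
        intro k
        induction k with
        | zero => simpa using hn0
        | succ k ih =>
            obtain ⟨n, h1, h2⟩ := hbranch2 ρ (T + k) (hρe _)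
              (hT _ (by omega)) (hT _ (by omega))
            have hnn : n = n0 := by
              by_contra hne
              exact hqd n n0 hne _ h1 ih
            rw [show T + (k + 1) = T + k + 1 by omega]
            exact hnn ▸ h2
      exact not_tail_in_finite hρinj (List.finite_toSet (q n0)) (N := T) fun t ht => by
        have := hconst (t - T)
        rwa [show T + (t - T) = t by omega] at this
    have hstay : ∀ t, ρ t ∈ Set.range f → ρ (t + 1) ∈ Set.range f := by
      intro t hft
      by_contra hnext
      obtain ⟨s, hs1, hs2, hs3⟩ := exists_min_gt (t + 1) (by
        obtain ⟨s, hs1, hs2⟩ := hinfs (t + 2)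
        exact ⟨s, by omega, hs2⟩)
      have hmidf : ∀ r, t + 1 ≤ r → r < s → ρ r ∉ Set.range f := by
        intro r h1 h2
        rcases eq_or_lt_of_le h1 with rfl | h1'
        · exact hnext
        · exact hs3 r (by omega) h2
      obtain ⟨m, hm1, hm2⟩ := hxchg ρ t (hρe t) hft hnext
      have hmid : ∀ k, t + 1 + k < s → ρ (t + 1 + k) ∈ q m := by
        intro k
        induction k with
        | zero =>
            intro _
            rw [show t + 1 + 0 = t + 1 by omega, hm2]
            exact hgfq m
        | succ k ih =>
            intro hlt
            have hk : t + 1 + k < s := by omega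
            obtain ⟨n, h1, h2⟩ := hbranch2 ρ (t + 1 + k) (hρe _)
              (hmidf _ (by omega) hk) (hmidf _ (by omega) (by omega))
            have hnn : n = m := by
              by_contra hne
              exact hqd n m hne _ h1 (ih hk)
            rw [show t + 1 + (k + 1) = t + 1 + k + 1 by omega]
            exact hnn ▸ h2
      have hsge : t + 2 ≤ s := by omega
      have hpre : ρ (s - 1) ∈ q m := by
        have := hmid (s - 1 - (t + 1)) (by omega)
        rwa [show t + 1 + (s - 1 - (t + 1)) = s - 1 by omega] at this
      have hpref : ρ (s - 1) ∉ Set.range f := hmidf _ (by omega) (by omega)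
      obtain ⟨m', hm'1, hm'2⟩ := hxchg' ρ (s - 1) (hρe (s - 1)) hpref
        (by rw [show s - 1 + 1 = s by omega]; exact hs2)
      rw [show s - 1 + 1 = s by omega] at hm'1
      have hmm : m' = m := by
        by_contra hne
        exact hqd m' m hne _ (show ρ (s - 1) ∈ q m' by rw [hm'2]; exact hgfq m') hpre
      have heq : ρ s = ρ t := by rw [hm'1, hmm, ← hm1]
      have := hρinj heq
      omega
    obtain ⟨t0, -, ht0⟩ := hinfs 0
    refine ⟨t0, fun t ht => ?_⟩
    have hkey : ∀ k, ρ (t0 + k) ∈ Set.range f := by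
      intro k
      induction k with
      | zero => simpa using ht0
      | succ k ih =>
          have := hstay (t0 + k) ih
          rwa [show t0 + (k + 1) = t0 + k + 1 by omega]
    have := hkey (t - t0)
    rwa [show t0 + (t - t0) = t by omega] at this
  rcases hR with rfl | rfl
  · -- dominated out-ray: refute the in-ray G
    obtain ⟨t0, ht0⟩ := confine G hGinj (fun t => hG.1 ⟨t, rfl⟩)
      (fun t => Or.inr (hG.2 ⟨t, rfl⟩))
    have hvt : ∀ k, G (t0 + k) ∈ Set.range f := fun k => ht0 _ (by omega)
    set φ : ℕ → ℕ := fun k => (hvt k).choose with hφdef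
    have hφs : ∀ k, f (φ k) = G (t0 + k) := fun k => (hvt k).choose_spec
    have hφinj : Function.Injective φ := by
      intro i j hij
      have h2 : G (t0 + i) = G (t0 + j) := by rw [← hφs i, ← hφs j, hij]
      have := hGinj h2
      omega
    have hstep : ∀ k, φ k = 0 ∨ (1 ≤ φ k ∧ φ (k + 1) = φ k - 1) := by
      intro k
      have he : (G (t0 + k + 1), G (t0 + k)) ∈ D'.edges := hG.2 ⟨t0 + k, rfl⟩
      have hsucc : t0 + (k + 1) = t0 + k + 1 := by omega
      rcases hedge _ he with hr | ⟨n, hn1, hn2⟩ | ⟨n, he2 | he2⟩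
      · rcases hr with ⟨mm, hmm⟩ | ⟨mm, hmm⟩
        · obtain ⟨e1, e2⟩ := Prod.ext_iff.1 hmm
          right
          have a1 : φ (k + 1) = mm := hfinj (by rw [hφs, hsucc]; exact e1)
          have a2 : φ k = mm + 1 := hfinj (by rw [hφs]; exact e2)
          omega
        · obtain ⟨e1, e2⟩ := Prod.ext_iff.1 hmm
          left
          exact hfinj (by rw [hφs]; exact e2)
      · exact absurd (hvt k) (hqf n _ hn2)
      · obtain ⟨e1, e2⟩ := Prod.ext_iff.1 he2
        have e2' : G (t0 + k) = gf n := e2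
        exact absurd (hvt k) (by rw [e2']; exact hqf n _ (hgfq n))
      · obtain ⟨e1, e2⟩ := Prod.ext_iff.1 he2
        have e1' : G (t0 + k + 1) = gf n := e1
        refine absurd (hvt (k + 1)) ?_
        rw [hsucc, e1']
        exact hqf n _ (hgfq n)
    obtain ⟨K, hK⟩ := eventually_avoids hφinj (Set.finite_singleton 0)
    refine no_descending φ K fun k hk => ?_
    rcases hstep k with h0 | h1
    · exact absurd (Set.mem_singleton_iff.2 h0) (hK k hk)
    · exact h1
  · -- dominated in-ray: refute the out-ray F
    obtain ⟨t0, ht0⟩ := confine F hFinj (fun t => hF.1 ⟨t, rfl⟩)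
      (fun t => Or.inl (hF.2 ⟨t, rfl⟩))
    have hvt : ∀ k, F (t0 + k) ∈ Set.range f := fun k => ht0 _ (by omega)
    set φ : ℕ → ℕ := fun k => (hvt k).choose with hφdef
    have hφs : ∀ k, f (φ k) = F (t0 + k) := fun k => (hvt k).choose_spec
    have hφinj : Function.Injective φ := by
      intro i j hij
      have h2 : F (t0 + i) = F (t0 + j) := by rw [← hφs i, ← hφs j, hij]
      have := hFinj h2
      omega
    have hstep : ∀ k, φ k = 0 ∨ (1 ≤ φ k ∧ φ (k + 1) = φ k - 1) := by
      intro k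
      have he : (F (t0 + k), F (t0 + k + 1)) ∈ D'.edges := hF.2 ⟨t0 + k, rfl⟩
      have hsucc : t0 + (k + 1) = t0 + k + 1 := by omega
      rcases hedge _ he with hr | ⟨n, hn1, hn2⟩ | ⟨n, he2 | he2⟩
      · rcases hr with ⟨mm, hmm⟩ | ⟨mm, hmm⟩
        · obtain ⟨e1, e2⟩ := Prod.ext_iff.1 hmm
          right
          have a1 : φ k = mm + 1 := hfinj (by rw [hφs]; exact e1)
          have a2 : φ (k + 1) = mm := hfinj (by rw [hφs, hsucc]; exact e2)
          omega
        · obtain ⟨e1, e2⟩ := Prod.ext_iff.1 hmm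
          left
          exact hfinj (by rw [hφs]; exact e1)
      · exact absurd (hvt k) (hqf n _ hn1)
      · obtain ⟨e1, e2⟩ := Prod.ext_iff.1 he2
        have e2' : F (t0 + k + 1) = gf n := e2
        refine absurd (hvt (k + 1)) ?_
        rw [hsucc, e2']
        exact hqf n _ (hgfq n)
      · obtain ⟨e1, e2⟩ := Prod.ext_iff.1 he2
        have e1' : F (t0 + k) = gf n := e1
        exact absurd (hvt k) (by rw [e1']; exact hqf n _ (hgfq n))
    obtain ⟨K, hK⟩ := eventually_avoids hφinj (Set.finite_singleton 0)
    refine no_descending φ K fun k hk => ?_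
    rcases hstep k with h0 | h1
    · exact absurd (Set.mem_singleton_iff.2 h0) (hK k hk)
    · exact h1


/-- `𝒟` of a comb does not contain a disjoint out-ray/in-ray pair. -/
theorem dcomb_no_rays {D' : DGraph V} {teeth : Set V} {F G : ℕ → V}
    (hFinj : Function.Injective F) (hGinj : Function.Injective G)
    (hF : outRay F ⊆ D') (hG : inRay G ⊆ D')
    (hdis : Set.range F ∩ Set.range G = ∅)
    (h : IsDComb D' teeth) : False := by
  classical
  obtain ⟨f, α, q, hfinj, hαinj, hq, hqt, hqd, hGeq, -⟩ := h
  have hhead : ∀ n, f (α n) ∈ q n := fun n =>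
    List.mem_of_mem_head? (by rw [(hq n).2]; simp)
  have hqf : ∀ n v, v ∈ q n → v ∈ Set.range f → v = f (α n) := by
    intro n v hv hvf
    obtain ⟨tl, htl⟩ := List.head?_eq_some_iff.1 (hq n).2
    rw [htl] at hv
    rcases List.mem_cons.1 hv with h' | h'
    · exact h'
    · exact absurd hvf (hqt n v (by rw [htl]; exact h'))
  have hedge : ∀ e, e ∈ D'.edges →
      (∃ m, e = (f m, f (m + 1)) ∨ e = (f (m + 1), f m)) ∨
      (∃ n, e.1 ∈ q n ∧ e.2 ∈ q n) := by
    intro e he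
    rw [hGeq] at he
    rcases he with he | he
    · rcases he with ⟨m, hm⟩ | ⟨m, hm⟩
      · exact Or.inl ⟨m, Or.inl hm⟩
      · exact Or.inl ⟨m, Or.inr hm⟩
    · simp only [iUnion_edges, Set.mem_iUnion] at he
      obtain ⟨n, hn⟩ := he
      exact Or.inr ⟨n, doubleOfList_edge_mem hn⟩
  have hvert : ∀ v, v ∈ D'.verts → v ∈ Set.range f ∨ ∃ n, v ∈ q n := by
    intro v hv
    rw [hGeq] at hv
    rcases hv with hv | hv
    · rcases hv with hv | hv
      · exact Or.inl hv
      · exact Or.inl hv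
    · simp only [iUnion_verts, Set.mem_iUnion] at hv
      obtain ⟨n, hn⟩ := hv
      rcases hn with hn | hn
      · exact Or.inr ⟨n, hn⟩
      · exact Or.inr ⟨n, hn⟩
  have spine : ∀ ρ : ℕ → V, Function.Injective ρ → (∀ t, ρ t ∈ D'.verts) →
      (∀ t, (ρ t, ρ (t + 1)) ∈ D'.edges ∨ (ρ (t + 1), ρ t) ∈ D'.edges) →
      ∃ K, ∀ m, K ≤ m → f m ∈ Set.range ρ := by
    intro ρ hρinj hρv hρe
    have hbranch2 : ∀ t', ρ t' ∉ Set.range f → ρ (t' + 1) ∉ Set.range f →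
        ∃ n, ρ t' ∈ q n ∧ ρ (t' + 1) ∈ q n := by
      intro t' h1 h2
      rcases hρe t' with he | he
      · rcases hedge _ he with ⟨m, hm | hm⟩ | ⟨n, hn1, hn2⟩
        · exact absurd ⟨m, ((Prod.ext_iff.1 hm).1).symm⟩ h1
        · exact absurd ⟨m + 1, ((Prod.ext_iff.1 hm).1).symm⟩ h1
        · exact ⟨n, hn1, hn2⟩
      · rcases hedge _ he with ⟨m, hm | hm⟩ | ⟨n, hn1, hn2⟩
        · exact absurd ⟨m, ((Prod.ext_iff.1 hm).1).symm⟩ h2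
        · exact absurd ⟨m + 1, ((Prod.ext_iff.1 hm).1).symm⟩ h2
        · exact ⟨n, hn2, hn1⟩
    have hxchg : ∀ t', ρ t' ∈ Set.range f → ρ (t' + 1) ∉ Set.range f →
        ∃ n, ρ t' = f (α n) ∧ ρ (t' + 1) ∈ q n := by
      intro t' h1 h2
      rcases hρe t' with he | he
      · rcases hedge _ he with ⟨m, hm | hm⟩ | ⟨n, hn1, hn2⟩
        · exact absurd ⟨m + 1, ((Prod.ext_iff.1 hm).2).symm⟩ h2
        · exact absurd ⟨m, ((Prod.ext_iff.1 hm).2).symm⟩ h2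
        · exact ⟨n, hqf n _ hn1 h1, hn2⟩
      · rcases hedge _ he with ⟨m, hm | hm⟩ | ⟨n, hn1, hn2⟩
        · exact absurd ⟨m, ((Prod.ext_iff.1 hm).1).symm⟩ h2
        · exact absurd ⟨m + 1, ((Prod.ext_iff.1 hm).1).symm⟩ h2
        · exact ⟨n, hqf n _ hn2 h1, hn1⟩
    have hxchg' : ∀ t', ρ t' ∉ Set.range f → ρ (t' + 1) ∈ Set.range f →
        ∃ n, ρ (t' + 1) = f (α n) ∧ ρ t' ∈ q n := by
      intro t' h1 h2
      rcases hρe t' with he | he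
      · rcases hedge _ he with ⟨m, hm | hm⟩ | ⟨n, hn1, hn2⟩
        · exact absurd ⟨m, ((Prod.ext_iff.1 hm).1).symm⟩ h1
        · exact absurd ⟨m + 1, ((Prod.ext_iff.1 hm).1).symm⟩ h1
        · exact ⟨n, hqf n _ hn2 h2, hn1⟩
      · rcases hedge _ he with ⟨m, hm | hm⟩ | ⟨n, hn1, hn2⟩
        · exact absurd ⟨m + 1, ((Prod.ext_iff.1 hm).2).symm⟩ h1
        · exact absurd ⟨m, ((Prod.ext_iff.1 hm).2).symm⟩ h1
        · exact ⟨n, hqf n _ hn1 h2, hn2⟩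
    have hinfs : ∀ T, ∃ t, T ≤ t ∧ ρ t ∈ Set.range f := by
      by_contra hcon
      push_neg at hcon
      obtain ⟨T, hT⟩ := hcon
      have hTq : ∃ n, ρ T ∈ q n := by
        rcases hvert _ (hρv T) with h' | h'
        · exact absurd h' (hT T le_rfl)
        · exact h'
      obtain ⟨n0, hn0⟩ := hTq
      have hconst : ∀ k, ρ (T + k) ∈ q n0 := by
        intro k
        induction k with
        | zero => simpa using hn0
        | succ k ih =>
            obtain ⟨n, h1, h2⟩ := hbranch2 (T + k) (hT _ (by omega)) (hT _ (by omega))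
            have hnn : n = n0 := by
              by_contra hne
              exact hqd n n0 hne _ h1 ih
            rw [show T + (k + 1) = T + k + 1 by omega]
            exact hnn ▸ h2
      exact not_tail_in_finite hρinj (List.finite_toSet (q n0)) (N := T) fun t ht => by
        have := hconst (t - T)
        rwa [show T + (t - T) = t by omega] at this
    have hstay : ∀ t, ρ t ∈ Set.range f → ρ (t + 1) ∈ Set.range f := by
      intro t hft
      by_contra hnext
      obtain ⟨s, hs1, hs2, hs3⟩ := exists_min_gt (t + 1) (by
        obtain ⟨s, hs1, hs2⟩ := hinfs (t + 2)
        exact ⟨s, by omega, hs2⟩)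
      have hmidf : ∀ r, t + 1 ≤ r → r < s → ρ r ∉ Set.range f := by
        intro r h1 h2
        rcases eq_or_lt_of_le h1 with rfl | h1'
        · exact hnext
        · exact hs3 r (by omega) h2
      obtain ⟨m, hm1, hm2⟩ := hxchg t hft hnext
      have hmid : ∀ k, t + 1 + k < s → ρ (t + 1 + k) ∈ q m := by
        intro k
        induction k with
        | zero =>
            intro _
            rw [show t + 1 + 0 = t + 1 by omega]
            exact hm2
        | succ k ih =>
            intro hlt
            have hk : t + 1 + k < s := by omega
            obtain ⟨n, h1, h2⟩ := hbranch2 (t + 1 + k)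
              (hmidf _ (by omega) hk) (hmidf _ (by omega) (by omega))
            have hnn : n = m := by
              by_contra hne
              exact hqd n m hne _ h1 (ih hk)
            rw [show t + 1 + (k + 1) = t + 1 + k + 1 by omega]
            exact hnn ▸ h2
      have hsge : t + 2 ≤ s := by omega
      have hpre : ρ (s - 1) ∈ q m := by
        have := hmid (s - 1 - (t + 1)) (by omega)
        rwa [show t + 1 + (s - 1 - (t + 1)) = s - 1 by omega] at this
      have hpref : ρ (s - 1) ∉ Set.range f := hmidf _ (by omega) (by omega)
      obtain ⟨m', hm'1, hm'2⟩ := hxchg' (s - 1) hpref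
        (by rw [show s - 1 + 1 = s by omega]; exact hs2)
      rw [show s - 1 + 1 = s by omega] at hm'1
      have hmm : m' = m := by
        by_contra hne
        exact hqd m' m hne _ hm'2 hpre
      have heq : ρ s = ρ t := by rw [hm'1, hmm, ← hm1]
      have := hρinj heq
      omega
    obtain ⟨t0, -, ht0⟩ := hinfs 0
    have htail : ∀ k, ρ (t0 + k) ∈ Set.range f := by
      intro k
      induction k with
      | zero => simpa using ht0
      | succ k ih =>
          have := hstay (t0 + k) ih
          rwa [show t0 + (k + 1) = t0 + k + 1 by omega]
    set ψ : ℕ → ℕ := fun k => (htail k).choose with hψdef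
    have hψs : ∀ k, f (ψ k) = ρ (t0 + k) := fun k => (htail k).choose_spec
    have hψinj : Function.Injective ψ := by
      intro i j hij
      have h2 : ρ (t0 + i) = ρ (t0 + j) := by rw [← hψs i, ← hψs j, hij]
      have := hρinj h2
      omega
    have hsucc : ∀ k : ℕ, t0 + (k + 1) = t0 + k + 1 := fun k => by omega
    have hstep : ∀ k, ψ (k + 1) = ψ k + 1 ∨ ψ k = ψ (k + 1) + 1 := by
      intro k
      have hbr : ∀ n, ρ (t0 + k) ∈ q n → ρ (t0 + k + 1) ∈ q n → False := by
        intro n h1 h2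
        have e1 : ρ (t0 + k) = f (α n) := hqf n _ h1 (htail k)
        have e2 : ρ (t0 + k + 1) = f (α n) := hqf n _ h2 (by
          have := htail (k + 1); rwa [hsucc k] at this)
        have := hρinj (e1.trans e2.symm)
        omega
      rcases hρe (t0 + k) with he | he
      · rcases hedge _ he with ⟨m, hm | hm⟩ | ⟨n, hn1, hn2⟩
        · obtain ⟨e1, e2⟩ := Prod.ext_iff.1 hm
          left
          have a1 : ψ k = m := hfinj (by rw [hψs]; exact e1)
          have a2 : ψ (k + 1) = m + 1 := hfinj (by rw [hψs, hsucc]; exact e2)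
          omega
        · obtain ⟨e1, e2⟩ := Prod.ext_iff.1 hm
          right
          have a1 : ψ k = m + 1 := hfinj (by rw [hψs]; exact e1)
          have a2 : ψ (k + 1) = m := hfinj (by rw [hψs, hsucc]; exact e2)
          omega
        · exact (hbr n hn1 hn2).elim
      · rcases hedge _ he with ⟨m, hm | hm⟩ | ⟨n, hn1, hn2⟩
        · obtain ⟨e1, e2⟩ := Prod.ext_iff.1 hm
          right
          have a1 : ψ (k + 1) = m := hfinj (by rw [hψs, hsucc]; exact e1)
          have a2 : ψ k = m + 1 := hfinj (by rw [hψs]; exact e2)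
          omega
        · obtain ⟨e1, e2⟩ := Prod.ext_iff.1 hm
          left
          have a1 : ψ (k + 1) = m + 1 := hfinj (by rw [hψs, hsucc]; exact e1)
          have a2 : ψ k = m := hfinj (by rw [hψs]; exact e2)
          omega
        · exact (hbr n hn2 hn1).elim
    have hup : ∀ K, ∃ k, K ≤ k ∧ ψ (k + 1) = ψ k + 1 := by
      intro K
      by_contra hc
      push_neg at hc
      refine no_descending ψ K fun k hk => ?_
      rcases hstep k with h' | h'
      · exact absurd h' (hc k hk)
      · exact ⟨by omega, by omega⟩
    obtain ⟨k0, -, hk0⟩ := hup 0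
    have hpers : ∀ j, ψ (k0 + j + 1) = ψ (k0 + j) + 1 := by
      intro j
      induction j with
      | zero => simpa using hk0
      | succ j ih =>
          rcases hstep (k0 + j + 1) with h' | h'
          · rwa [show k0 + (j + 1) = k0 + j + 1 by omega]
          · have h2 : ψ (k0 + j + 1 + 1) = ψ (k0 + j) := by omega
            have := hψinj h2
            omega
    have hlin : ∀ j, ψ (k0 + j) = ψ k0 + j := by
      intro j
      induction j with
      | zero => simp
      | succ j ih =>
          have := hpers j
          rw [show k0 + (j + 1) = k0 + j + 1 by omega]
          omega
    refine ⟨ψ k0, fun m hm => ?_⟩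
    refine ⟨t0 + (k0 + (m - ψ k0)), ?_⟩
    have := hψs (k0 + (m - ψ k0))
    rw [hlin, show ψ k0 + (m - ψ k0) = m by omega] at this
    exact this.symm
  obtain ⟨K1, h1⟩ := spine F hFinj (fun t => hF.1 ⟨t, rfl⟩)
    (fun t => Or.inl (hF.2 ⟨t, rfl⟩))
  obtain ⟨K2, h2⟩ := spine G hGinj (fun t => hG.1 ⟨t, rfl⟩)
    (fun t => Or.inr (hG.2 ⟨t, rfl⟩))
  have hx1 := h1 (max K1 K2) (by omega)
  have hx2 := h2 (max K1 K2) (by omega)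
  have hmem : f (max K1 K2) ∈ Set.range F ∩ Set.range G := ⟨hx1, hx2⟩
  rw [hdis] at hmem
  exact hmem


/-- A triangle comb does not contain a disjoint out-ray/in-ray pair. -/
theorem trianglecomb_no_rays {D' : DGraph V} {teeth : Set V} {F G : ℕ → V}
    (hFinj : Function.Injective F) (hGinj : Function.Injective G)
    (hF : outRay F ⊆ D') (hG : inRay G ⊆ D')
    (hdis : Set.range F ∩ Set.range G = ∅)
    (h : IsTriangleComb D' teeth) : False := by
  classical
  obtain ⟨α, q, S, L, R, B, tt, hαinj, hSd, hqnd, hqd, hqS, hLRB, hsingle, htri,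
    -, -, -, -, hGeq, -⟩ := h
  have Sshape : ∀ k, (∃ v, S k = single v) ∨ (∃ x y z, S k = triangle x y z) := by
    intro k
    by_cases hex : ∃ n, α n = k ∧ 1 ≤ k
    · obtain ⟨n, hn1, hn2⟩ := hex
      obtain ⟨x, y, z, -, -, -, hS⟩ := htri n (by omega)
      exact Or.inr ⟨x, y, z, by rw [← hn1]; exact hS⟩
    · exact Or.inl (hsingle k hex)
  have SvertsFin : ∀ k, (S k).verts.Finite := by
    intro k
    rcases Sshape k with ⟨v, hv⟩ | ⟨x, y, z, hv⟩
    · rw [hv]; exact Set.finite_singleton v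
    · rw [hv]; exact (Set.finite_singleton z).insert y |>.insert x
  have Sedges : ∀ k e, e ∈ (S k).edges → e.1 ∈ (S k).verts ∧ e.2 ∈ (S k).verts := by
    intro k e he
    rcases Sshape k with ⟨v, hv⟩ | ⟨x, y, z, hv⟩
    · rw [hv] at he; exact absurd he (Set.notMem_empty e)
    · rw [hv] at he ⊢
      rcases he with rfl | rfl | rfl
      · exact ⟨Or.inl rfl, Or.inr (Or.inl rfl)⟩
      · exact ⟨Or.inr (Or.inl rfl), Or.inr (Or.inr rfl)⟩
      · exact ⟨Or.inr (Or.inr rfl), Or.inl rfl⟩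
  have hSuniq : ∀ {v j k}, v ∈ (S j).verts → v ∈ (S k).verts → j = k := by
    intro v j k h1 h2
    by_contra hne
    exact absurd (Set.mem_inter h1 h2) (by rw [hSd j k hne]; exact Set.notMem_empty v)
  have hL := fun k => (hLRB k).1
  have hR := fun k => (hLRB k).2.1
  have hB := fun k => (hLRB k).2.2
  set inS : V → Prop := fun v => ∃ k, v ∈ (S k).verts with hinS
  -- edge classification
  have hedgeT : ∀ e, e ∈ D'.edges →
      (∃ k, e.1 ∈ (S k).verts ∧ e.2 ∈ (S k).verts) ∨
      (∃ k, e = (R k, L (k + 1)) ∨ e = (L (k + 1), R k)) ∨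
      (∃ n, e.1 ∈ q n ∧ e.2 ∈ q n) ∨
      (∃ n hh, (q n).head? = some hh ∧ (e = (B (α n), hh) ∨ e = (hh, B (α n)))) := by
    intro e he
    rw [hGeq] at he
    rcases he with (he | he) | he
    · simp only [iUnion_edges, Set.mem_iUnion] at he
      obtain ⟨k, hk⟩ := he
      exact Or.inl ⟨k, Sedges k e hk⟩
    · simp only [iUnion_edges, Set.mem_iUnion] at he
      obtain ⟨k, hk⟩ := he
      rcases hk with hk | hk
      · exact Or.inr (Or.inl ⟨k, Or.inl hk⟩)
      · exact Or.inr (Or.inl ⟨k, Or.inr hk⟩)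
    · simp only [iUnion_edges, Set.mem_iUnion] at he
      obtain ⟨n, hn⟩ := he
      cases hql : q n with
      | nil =>
          rw [hql] at hn
          exact absurd hn (Set.notMem_empty e)
      | cons hh tl =>
          rw [hql] at hn
          simp only [branchGraph] at hn
          rcases hn with hn | hn
          · have := doubleOfList_edge_mem hn
            rw [← hql] at this
            exact Or.inr (Or.inr (Or.inl ⟨n, this⟩))
          · rcases hn with hn | hn
            · exact Or.inr (Or.inr (Or.inr ⟨n, hh, by rw [hql]; rfl, Or.inl hn⟩))
            · exact Or.inr (Or.inr (Or.inr ⟨n, hh, by rw [hql]; rfl, Or.inr hn⟩))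
  have hvertT : ∀ v, v ∈ D'.verts → inS v ∨ ∃ n, v ∈ q n := by
    intro v hv
    rw [hGeq] at hv
    rcases hv with (hv | hv) | hv
    · simp only [iUnion_verts, Set.mem_iUnion] at hv
      obtain ⟨k, hk⟩ := hv
      exact Or.inl ⟨k, hk⟩
    · simp only [iUnion_verts, Set.mem_iUnion] at hv
      obtain ⟨k, hk⟩ := hv
      rcases hk with rfl | hk
      · exact Or.inl ⟨k, hR k⟩
      · rw [Set.mem_singleton_iff] at hk
        subst hk
        exact Or.inl ⟨k + 1, hL (k + 1)⟩
    · simp only [iUnion_verts, Set.mem_iUnion] at hv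
      obtain ⟨n, hn⟩ := hv
      cases hql : q n with
      | nil =>
          rw [hql] at hn
          exact absurd hn (Set.notMem_empty v)
      | cons hh tl =>
          rw [hql] at hn
          simp only [branchGraph] at hn
          rcases hn with hn | hn
          · rcases hn with hn | hn
            · exact Or.inr ⟨n, by rw [hql]; exact hn⟩
            · exact Or.inr ⟨n, by rw [hql]; exact hn⟩
          · rcases hn with rfl | hn
            · exact Or.inl ⟨α n, hB (α n)⟩
            · rw [Set.mem_singleton_iff] at hn
              subst hn
              exact Or.inr ⟨n, by rw [hql]; simp⟩
  have hqnotS : ∀ {n v}, v ∈ q n → ¬ inS v := by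
    intro n v hv ⟨k, hk⟩
    exact hqS n v hv k hk
  -- the main spine lemma
  have spine : ∀ ρ : ℕ → V, Function.Injective ρ → (∀ t, ρ t ∈ D'.verts) →
      (∀ t, (ρ t, ρ (t + 1)) ∈ D'.edges ∨ (ρ (t + 1), ρ t) ∈ D'.edges) →
      ∃ K, ∀ c, K ≤ c → R c ∈ Set.range ρ := by
    intro ρ hρinj hρv hρe
    have hbranch2 : ∀ t', ¬ inS (ρ t') → ¬ inS (ρ (t' + 1)) →
        ∃ n, ρ t' ∈ q n ∧ ρ (t' + 1) ∈ q n := by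
      intro t' h1 h2
      rcases hρe t' with he | he
      · rcases hedgeT _ he with ⟨k, hk1, hk2⟩ | ⟨k, hk | hk⟩ | ⟨n, hn1, hn2⟩ |
          ⟨n, hh, hhd, hk | hk⟩
        · exact absurd ⟨k, hk1⟩ h1
        · exact absurd ⟨k, (pair_eq hk).1 ▸ hR k⟩ h1
        · exact absurd ⟨k + 1, (pair_eq hk).1 ▸ hL (k + 1)⟩ h1
        · exact ⟨n, hn1, hn2⟩
        · exact absurd ⟨α n, (pair_eq hk).1 ▸ hB (α n)⟩ h1
        · exact absurd ⟨α n, (pair_eq hk).2 ▸ hB (α n)⟩ h2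
      · rcases hedgeT _ he with ⟨k, hk1, hk2⟩ | ⟨k, hk | hk⟩ | ⟨n, hn1, hn2⟩ |
          ⟨n, hh, hhd, hk | hk⟩
        · exact absurd ⟨k, hk1⟩ h2
        · exact absurd ⟨k, (pair_eq hk).1 ▸ hR k⟩ h2
        · exact absurd ⟨k + 1, (pair_eq hk).1 ▸ hL (k + 1)⟩ h2
        · exact ⟨n, hn2, hn1⟩
        · exact absurd ⟨α n, (pair_eq hk).1 ▸ hB (α n)⟩ h2
        · exact absurd ⟨α n, (pair_eq hk).2 ▸ hB (α n)⟩ h1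
    have hxchg : ∀ t', inS (ρ t') → ¬ inS (ρ (t' + 1)) →
        ∃ n hh, ρ t' = B (α n) ∧ (q n).head? = some hh ∧ ρ (t' + 1) = hh := by
      intro t' h1 h2
      rcases hρe t' with he | he
      · rcases hedgeT _ he with ⟨k, hk1, hk2⟩ | ⟨k, hk | hk⟩ | ⟨n, hn1, hn2⟩ |
          ⟨n, hh, hhd, hk | hk⟩
        · exact absurd ⟨k, hk2⟩ h2
        · exact absurd ⟨k + 1, (pair_eq hk).2 ▸ hL (k + 1)⟩ h2
        · exact absurd ⟨k, (pair_eq hk).2 ▸ hR k⟩ h2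
        · exact absurd h1 (hqnotS hn1)
        · exact ⟨n, hh, (pair_eq hk).1, hhd, (pair_eq hk).2⟩
        · exact absurd ⟨α n, (pair_eq hk).2 ▸ hB (α n)⟩ h2
      · rcases hedgeT _ he with ⟨k, hk1, hk2⟩ | ⟨k, hk | hk⟩ | ⟨n, hn1, hn2⟩ |
          ⟨n, hh, hhd, hk | hk⟩
        · exact absurd ⟨k, hk1⟩ h2
        · exact absurd ⟨k, (pair_eq hk).1 ▸ hR k⟩ h2
        · exact absurd ⟨k + 1, (pair_eq hk).1 ▸ hL (k + 1)⟩ h2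
        · exact absurd h1 (hqnotS hn2)
        · exact absurd ⟨α n, (pair_eq hk).1 ▸ hB (α n)⟩ h2
        · exact ⟨n, hh, (pair_eq hk).2, hhd, (pair_eq hk).1⟩
    have hxchg' : ∀ t', ¬ inS (ρ t') → inS (ρ (t' + 1)) →
        ∃ n hh, ρ (t' + 1) = B (α n) ∧ (q n).head? = some hh ∧ ρ t' = hh := by
      intro t' h1 h2
      rcases hρe t' with he | he
      · rcases hedgeT _ he with ⟨k, hk1, hk2⟩ | ⟨k, hk | hk⟩ | ⟨n, hn1, hn2⟩ |
          ⟨n, hh, hhd, hk | hk⟩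
        · exact absurd ⟨k, hk1⟩ h1
        · exact absurd ⟨k, (pair_eq hk).1 ▸ hR k⟩ h1
        · exact absurd ⟨k + 1, (pair_eq hk).1 ▸ hL (k + 1)⟩ h1
        · exact absurd h2 (hqnotS hn2)
        · exact absurd ⟨α n, (pair_eq hk).1 ▸ hB (α n)⟩ h1
        · exact ⟨n, hh, (pair_eq hk).2, hhd, (pair_eq hk).1⟩
      · rcases hedgeT _ he with ⟨k, hk1, hk2⟩ | ⟨k, hk | hk⟩ | ⟨n, hn1, hn2⟩ |
          ⟨n, hh, hhd, hk | hk⟩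
        · exact absurd ⟨k, hk2⟩ h1
        · exact absurd ⟨k + 1, (pair_eq hk).2 ▸ hL (k + 1)⟩ h1
        · exact absurd ⟨k, (pair_eq hk).2 ▸ hR k⟩ h1
        · exact absurd h2 (hqnotS hn1)
        · exact ⟨n, hh, (pair_eq hk).1, hhd, (pair_eq hk).2⟩
        · have hmem : ρ (t' + 1) ∈ q n := by
            rw [(pair_eq hk).1]
            exact List.mem_of_mem_head? (by rw [hhd]; simp)
          exact absurd h2 (hqnotS hmem)
    have hinfs : ∀ T, ∃ t, T ≤ t ∧ inS (ρ t) := by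
      by_contra hcon
      push_neg at hcon
      obtain ⟨T, hT⟩ := hcon
      have hTq : ∃ n, ρ T ∈ q n := by
        rcases hvertT _ (hρv T) with h' | h'
        · exact absurd h' (hT T le_rfl)
        · exact h'
      obtain ⟨n0, hn0⟩ := hTq
      have hconst : ∀ k, ρ (T + k) ∈ q n0 := by
        intro k
        induction k with
        | zero => simpa using hn0
        | succ k ih =>
            obtain ⟨n, h1, h2⟩ := hbranch2 (T + k) (hT _ (by omega)) (hT _ (by omega))
            have hnn : n = n0 := by
              by_contra hne
              exact hqd n n0 hne _ h1 ih
            rw [show T + (k + 1) = T + k + 1 by omega]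
            exact hnn ▸ h2
      exact not_tail_in_finite hρinj (List.finite_toSet (q n0)) (N := T) fun t ht => by
        have := hconst (t - T)
        rwa [show T + (t - T) = t by omega] at this
    have hstay : ∀ t, inS (ρ t) → inS (ρ (t + 1)) := by
      intro t hft
      by_contra hnext
      obtain ⟨s, hs1, hs2, hs3⟩ := exists_min_gt (t + 1) (by
        obtain ⟨s, hs1, hs2⟩ := hinfs (t + 2)
        exact ⟨s, by omega, hs2⟩)
      have hmidf : ∀ r, t + 1 ≤ r → r < s → ¬ inS (ρ r) := by
        intro r h1 h2
        rcases eq_or_lt_of_le h1 with rfl | h1'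
        · exact hnext
        · exact hs3 r (by omega) h2
      obtain ⟨n, hh, hBt, hhd, hht⟩ := hxchg t hft hnext
      have hhq : ρ (t + 1) ∈ q n := by
        rw [hht]
        exact List.mem_of_mem_head? (by rw [hhd]; simp)
      have hmid : ∀ k, t + 1 + k < s → ρ (t + 1 + k) ∈ q n := by
        intro k
        induction k with
        | zero =>
            intro _
            rw [show t + 1 + 0 = t + 1 by omega]
            exact hhq
        | succ k ih =>
            intro hlt
            have hk : t + 1 + k < s := by omega
            obtain ⟨n', h1, h2⟩ := hbranch2 (t + 1 + k)
              (hmidf _ (by omega) hk) (hmidf _ (by omega) (by omega))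
            have hnn : n' = n := by
              by_contra hne
              exact hqd n' n hne _ h1 (ih hk)
            rw [show t + 1 + (k + 1) = t + 1 + k + 1 by omega]
            exact hnn ▸ h2
      have hsge : t + 2 ≤ s := by omega
      have hpre : ρ (s - 1) ∈ q n := by
        have := hmid (s - 1 - (t + 1)) (by omega)
        rwa [show t + 1 + (s - 1 - (t + 1)) = s - 1 by omega] at this
      have hpref : ¬ inS (ρ (s - 1)) := hmidf _ (by omega) (by omega)
      obtain ⟨n', hh', hBs, hhd', hhs⟩ := hxchg' (s - 1) hpref
        (by rw [show s - 1 + 1 = s by omega]; exact hs2)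
      rw [show s - 1 + 1 = s by omega] at hBs
      have hh'q : ρ (s - 1) ∈ q n' := by
        rw [hhs]
        exact List.mem_of_mem_head? (by rw [hhd']; simp)
      have hnn : n' = n := by
        by_contra hne
        exact hqd n' n hne _ hh'q hpre
      subst hnn
      have hhh : hh' = hh := by
        rw [hhd] at hhd'
        exact (Option.some.injEq .. ▸ hhd').symm
      have heq1 : ρ (s - 1) = ρ (t + 1) := by rw [hhs, hhh, hht]
      have he1 := hρinj heq1
      have heq2 : ρ s = ρ t := by rw [hBs, hBt]
      have he2 := hρinj heq2
      omega
    obtain ⟨T0, -, hT0⟩ := hinfs 0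
    have hT : ∀ t, T0 ≤ t → inS (ρ t) := by
      intro t ht
      have hkey : ∀ k, inS (ρ (T0 + k)) := by
        intro k
        induction k with
        | zero => simpa using hT0
        | succ k ih =>
            have := hstay (T0 + k) ih
            rwa [show T0 + (k + 1) = T0 + k + 1 by omega]
      have := hkey (t - T0)
      rwa [show T0 + (t - T0) = t by omega] at this
    -- piece indices
    have hπ : ∀ k : ℕ, ∃ k', ρ (T0 + k) ∈ (S k').verts := fun k => hT (T0 + k) (by omega)
    set σ : ℕ → ℕ := fun k => (hπ k).choose with hσdef
    have hσs : ∀ k, ρ (T0 + k) ∈ (S (σ k)).verts := fun k => (hπ k).choose_spec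
    have hsucc : ∀ k : ℕ, T0 + (k + 1) = T0 + k + 1 := fun k => by omega
    have hstepT : ∀ k, σ (k + 1) = σ k ∨
        (σ (k + 1) = σ k + 1 ∧ ρ (T0 + k) = R (σ k)) ∨
        (σ k = σ (k + 1) + 1 ∧ ρ (T0 + k + 1) = R (σ (k + 1))) := by
      intro k
      have h1 := hσs k
      have h2 : ρ (T0 + k + 1) ∈ (S (σ (k + 1))).verts := by
        have := hσs (k + 1)
        rwa [hsucc] at this
      rcases hρe (T0 + k) with he | he
      · rcases hedgeT _ he with ⟨k', hk1, hk2⟩ | ⟨k', hk | hk⟩ | ⟨n, hn1, hn2⟩ |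
          ⟨n, hh, hhd, hk | hk⟩
        · left
          have e1 := hSuniq h1 hk1
          have e2 := hSuniq h2 hk2
          omega
        · right; left
          have e1 : ρ (T0 + k) = R k' := (pair_eq hk).1
          have e2 : ρ (T0 + k + 1) = L (k' + 1) := (pair_eq hk).2
          have a1 : σ k = k' := hSuniq h1 (e1 ▸ hR k')
          have a2 : σ (k + 1) = k' + 1 := hSuniq h2 (e2 ▸ hL (k' + 1))
          exact ⟨by omega, by rw [e1, a1]⟩
        · right; right
          have e1 : ρ (T0 + k) = L (k' + 1) := (pair_eq hk).1
          have e2 : ρ (T0 + k + 1) = R k' := (pair_eq hk).2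
          have a1 : σ k = k' + 1 := hSuniq h1 (e1 ▸ hL (k' + 1))
          have a2 : σ (k + 1) = k' := hSuniq h2 (e2 ▸ hR k')
          exact ⟨by omega, by rw [e2, a2]⟩
        · exact absurd ⟨σ k, h1⟩ (hqnotS hn1)
        · have hmem : ρ (T0 + k + 1) ∈ q n := by
            rw [(pair_eq hk).2]
            exact List.mem_of_mem_head? (by rw [hhd]; simp)
          exact absurd ⟨σ (k + 1), h2⟩ (hqnotS hmem)
        · have hmem : ρ (T0 + k) ∈ q n := by
            rw [(pair_eq hk).1]
            exact List.mem_of_mem_head? (by rw [hhd]; simp)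
          exact absurd ⟨σ k, h1⟩ (hqnotS hmem)
      · rcases hedgeT _ he with ⟨k', hk1, hk2⟩ | ⟨k', hk | hk⟩ | ⟨n, hn1, hn2⟩ |
          ⟨n, hh, hhd, hk | hk⟩
        · left
          have e1 := hSuniq h2 hk1
          have e2 := hSuniq h1 hk2
          omega
        · right; right
          have e1 : ρ (T0 + k + 1) = R k' := (pair_eq hk).1
          have e2 : ρ (T0 + k) = L (k' + 1) := (pair_eq hk).2
          have a1 : σ (k + 1) = k' := hSuniq h2 (e1 ▸ hR k')
          have a2 : σ k = k' + 1 := hSuniq h1 (e2 ▸ hL (k' + 1))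
          exact ⟨by omega, by rw [e1, a1]⟩
        · right; left
          have e1 : ρ (T0 + k + 1) = L (k' + 1) := (pair_eq hk).1
          have e2 : ρ (T0 + k) = R k' := (pair_eq hk).2
          have a1 : σ (k + 1) = k' + 1 := hSuniq h2 (e1 ▸ hL (k' + 1))
          have a2 : σ k = k' := hSuniq h1 (e2 ▸ hR k')
          exact ⟨by omega, by rw [e2, a2]⟩
        · exact absurd ⟨σ k, h1⟩ (hqnotS hn2)
        · have hmem : ρ (T0 + k) ∈ q n := by
            rw [(pair_eq hk).2]
            exact List.mem_of_mem_head? (by rw [hhd]; simp)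
          exact absurd ⟨σ k, h1⟩ (hqnotS hmem)
        · have hmem : ρ (T0 + k + 1) ∈ q n := by
            rw [(pair_eq hk).1]
            exact List.mem_of_mem_head? (by rw [hhd]; simp)
          exact absurd ⟨σ (k + 1), h2⟩ (hqnotS hmem)
    have hunb : ∀ c, ∃ k, c < σ k := by
      intro c
      by_contra hc
      push_neg at hc
      have hsub : (Set.univ : Set ℕ) ⊆
          {k | ρ (T0 + k) ∈ ⋃ k' ∈ Set.Iic c, (S k').verts} := by
        intro k _
        exact Set.mem_biUnion (hc k) (hσs k)
      have hfin : {k | ρ (T0 + k) ∈ ⋃ k' ∈ Set.Iic c, (S k').verts}.Finite := by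
        refine Set.Finite.preimage ?_ ((Set.finite_Iic c).biUnion fun k' _ => SvertsFin k')
        intro i _ j _ hij
        have := hρinj hij
        omega
      exact Set.infinite_univ (hfin.subset hsub)
    refine ⟨σ 0, fun c hc => ?_⟩
    have hex : ∃ k, c < σ k := hunb c
    have hfind := Nat.find_spec hex
    set k1 := Nat.find hex with hk1def
    have hk1pos : k1 ≠ 0 := by
      intro h0
      rw [h0] at hfind
      omega
    have hprev : ¬ c < σ (k1 - 1) := Nat.find_min hex (by omega)
    have hstep1 := hstepT (k1 - 1)
    rw [show k1 - 1 + 1 = k1 by omega] at hstep1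
    rcases hstep1 with h' | ⟨h', hRmem⟩ | ⟨h', hRmem⟩
    · omega
    · have hceq : σ (k1 - 1) = c := by omega
      exact ⟨T0 + (k1 - 1), by rw [hRmem, hceq]⟩
    · omega
  obtain ⟨K1, h1⟩ := spine F hFinj (fun t => hF.1 ⟨t, rfl⟩)
    (fun t => Or.inl (hF.2 ⟨t, rfl⟩))
  obtain ⟨K2, h2⟩ := spine G hGinj (fun t => hG.1 ⟨t, rfl⟩)
    (fun t => Or.inr (hG.2 ⟨t, rfl⟩))
  have hx1 := h1 (max K1 K2) (by omega)
  have hx2 := h2 (max K1 K2) (by omega)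
  have hmem : R (max K1 K2) ∈ Set.range F ∩ Set.range G := ⟨hx1, hx2⟩
  rw [hdis] at hmem
  exact hmem

end RayHelpers




end DGraph

end ChainAux

/-- Let `D` be a chain of triangles and let `D'` be a
strongly connected butterfly minor of `D` containing infinitely many teeth of
`D`.  Then `D'` contains two disjoint rays, namely an out-ray and an in-ray
that are vertex-disjoint; consequently `D'` is not shaped by a star, not a
dominated directed ray, and not shaped by a comb. -/
theorem chain_of_triangles_butterfly_minors {V : Type u} (D D' : DGraph V)
    (teeth : Set V) (hD : DGraph.IsChainOfTriangles D teeth)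
    (hm : D.IsButterflyMinor D') (hsc : D'.StronglyConnected)
    (hteeth : (D'.verts ∩ teeth).Infinite) :
    (∃ f g : ℕ → V, Function.Injective f ∧ Function.Injective g ∧
      DGraph.outRay f ⊆ D' ∧ DGraph.inRay g ⊆ D' ∧
      Set.range f ∩ Set.range g = ∅) ∧
    (∀ t' : Set V, ¬ DGraph.IsShapedByStar D' t') ∧
    ¬ DGraph.IsDominatedDirectedRay D' ∧
    (∀ t' : Set V, ¬ DGraph.IsShapedByComb D' t') := by
  classical
  obtain ⟨M⟩ := hm
  obtain ⟨a, b, c, q, hinj, hq12, hq3, hq4, hDeq, hteq⟩ := hD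
  set C : DGraph.ChainData V :=
    ⟨D, a, b, c, q, hinj, fun i => (hq12 i).1, fun i => (hq12 i).2, hq3, hq4, hDeq⟩
    with hC
  have hts : ∀ N, ∃ i, N ≤ i ∧ C.tooth i ∈ D'.verts := by
    intro N
    by_contra hcon
    push_neg at hcon
    have hsub : D'.verts ∩ teeth ⊆ (fun i => C.tooth i) '' (Set.Iio N) := by
      rintro v ⟨hv1, hv2⟩
      rw [hteq] at hv2
      obtain ⟨i, hi⟩ := hv2
      have hi' : (C.q i).getLast? = some v := hi
      have hvi : C.tooth i = v := by
        have h2 := (C.tooth_last? i).symm.trans hi'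
        exact Option.some_injective _ h2
      have hiN : i < N := by
        by_contra hgt
        push_neg at hgt
        exact hcon i hgt (hvi ▸ hv1)
      exact ⟨i, hiN, hvi⟩
    exact hteeth (((Set.finite_Iio N).image _).subset hsub)
  obtain ⟨F, G, hFinj, hGinj, hF, hG, hdis⟩ :=
    DGraph.exists_disjoint_rays C M hsc hts
  refine ⟨⟨F, G, hFinj, hGinj, hF, hG, hdis⟩, ?_, ?_, ?_⟩
  · rintro t' (⟨hdom, -⟩ | hstar | hrcs)
    · exact DGraph.not_dominated hFinj hGinj hF hG hdom
    · exact DGraph.dstar_no_outRay hFinj hF hstar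
    · exact DGraph.raycentre_no_rays hFinj hGinj hF hG hrcs
  · exact DGraph.not_dominated hFinj hGinj hF hG
  · rintro t' (hcomb | htri)
    · exact DGraph.dcomb_no_rays hFinj hGinj hF hG hdis hcomb
    · exact DGraph.trianglecomb_no_rays hFinj hGinj hF hG hdis htri
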